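/- arXiv:1908.07664 — 2 statements merged into one kernel-verified Lean document; each statement's English description precedes it below -/
import Mathlib

section
/- Let Γ be a finite simple graph with vertex set V = {1, …, n} whose 4-cliques are almost disjoint, i.e., no two distinct 4-cliques of Γ intersect in a 3-clique (any two distinct 4-cliques share at most two vertices). Let X be a 4-clique of Γ, let H be the subgroup of P_Γ generated by {a_{ij} : i < j, {i,j} ⊆ X}, and let {r,s} be an edge of Γ with {r,s} ⊄ X. Then [[H, H], a_{rs}] = 1 in P_Γ, i.e., a_{rs} commutes with every element of the commutator subgroup [H, H]. -/
abbrev PBIdx (n : ℕ) : Type := {p : Fin n × Fin n // p.1 < p.2}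

namespace GraphicBraid

open scoped commutatorElement

def ofIdx {n : ℕ} {i j : Fin n} (h : i < j) : FreeGroup (PBIdx n) :=
  FreeGroup.of ⟨(i, j), h⟩

/-- The Artin relators for the pure braid group `P_n`. -/
def pureBraidRels (n : ℕ) : Set (FreeGroup (PBIdx n)) :=
  {w | ∃ (i j r s : Fin n) (hij : i < j) (hrs : r < s),
      (s < i ∨ (i < r ∧ s < j)) ∧ w = ⁅ofIdx hij, ofIdx hrs⁆} ∪
  {w | ∃ (r i s j : Fin n) (hri : r < i) (his : i < s) (hsj : s < j),
      w = ⁅ofIdx (his.trans hsj), ofIdx hsj * ofIdx (hri.trans his) * (ofIdx hsj)⁻¹⁆} ∪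
  {w | ∃ (i j r : Fin n) (hij : i < j) (hjr : j < r),
      w = ⁅ofIdx hij * ofIdx (hij.trans hjr), ofIdx hjr⁆ ∨
      w = ⁅ofIdx hij, ofIdx (hij.trans hjr) * ofIdx hjr⁆}

/-- Relators killing the generators corresponding to non-edges of `Γ`. -/
def nonEdgeRels {n : ℕ} (Γ : SimpleGraph (Fin n)) : Set (FreeGroup (PBIdx n)) :=
  {w | ∃ p : PBIdx n, ¬ Γ.Adj p.1.1 p.1.2 ∧ w = FreeGroup.of p}

def graphicRels {n : ℕ} (Γ : SimpleGraph (Fin n)) : Set (FreeGroup (PBIdx n)) :=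
  pureBraidRels n ∪ nonEdgeRels Γ

/-- The graphic pure braid group `P_Γ`. -/
abbrev GPB {n : ℕ} (Γ : SimpleGraph (Fin n)) : Type := PresentedGroup (graphicRels Γ)

/-- The image of the Artin generator `a_{ij}` in `P_Γ`. -/
def agen {n : ℕ} (Γ : SimpleGraph (Fin n)) {i j : Fin n} (h : i < j) : GPB Γ :=
  PresentedGroup.of (rels := graphicRels Γ) ⟨(i, j), h⟩

/-- Relators killing the generators `a_{ij}` with `{i,j} ⊄ X`. -/
def killRels {n : ℕ} (X : Set (Fin n)) : Set (FreeGroup (PBIdx n)) :=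
  {w | ∃ p : PBIdx n, ¬ (p.1.1 ∈ X ∧ p.1.2 ∈ X) ∧ w = FreeGroup.of p}

/-- The quotient `P_X` of `P_Γ` obtained by killing all generators `a_{ij}` with `{i,j} ⊄ X`. -/
abbrev GPBX {n : ℕ} (Γ : SimpleGraph (Fin n)) (X : Set (Fin n)) : Type :=
  PresentedGroup (graphicRels Γ ∪ killRels X)

/-- The canonical surjection between presented groups when the set of relators grows. -/
def quotMap {α : Type*} {R S : Set (FreeGroup α)} (h : R ⊆ S) :
    PresentedGroup R →* PresentedGroup S :=
  QuotientGroup.map _ _ (MonoidHom.id _)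
    (fun _ hx => Subgroup.normalClosure_mono h hx)

/-- The quotient map `ρ_X : P_Γ → P_X`. -/
def rho {n : ℕ} (Γ : SimpleGraph (Fin n)) (X : Set (Fin n)) : GPB Γ →* GPBX Γ X :=
  quotMap Set.subset_union_left

lemma killRels_anti {n : ℕ} {X Y : Set (Fin n)} (h : X ⊆ Y) : killRels Y ⊆ killRels X := by
  rintro w ⟨p, hp, rfl⟩
  exact ⟨p, fun hx => hp ⟨h hx.1, h hx.2⟩, rfl⟩

/-- The quotient map `P_Y → P_X` for `X ⊆ Y`. -/
def rhoDown {n : ℕ} (Γ : SimpleGraph (Fin n)) {X Y : Set (Fin n)} (h : X ⊆ Y) :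
    GPBX Γ Y →* GPBX Γ X :=
  quotMap (Set.union_subset_union_right _ (killRels_anti h))

/-- `X` is a maximal clique of `Γ`. -/
def MaxClique {n : ℕ} (Γ : SimpleGraph (Fin n)) (X : Set (Fin n)) : Prop :=
  Γ.IsClique X ∧ ∀ Y : Set (Fin n), Γ.IsClique Y → X ⊆ Y → Y = X


/-- The subgroup of `P_Γ` generated by the generators `a_{ij}` with `{i,j} ⊆ X`. -/
def cliqueSubgroup {n : ℕ} (Γ : SimpleGraph (Fin n)) (X : Set (Fin n)) : Subgroup (GPB Γ) :=
  Subgroup.closure {g : GPB Γ | ∃ p : PBIdx n, (p.1.1 ∈ X ∧ p.1.2 ∈ X) ∧ g = PresentedGroup.of p}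

/-- The bipartite incidence graph of edges and 3-cliques (triangles) of `Γ`. -/
def incidenceGraph {n : ℕ} (Γ : SimpleGraph (Fin n)) :
    SimpleGraph (Γ.edgeSet ⊕ {T : Finset (Fin n) // Γ.IsNClique 3 T}) where
  Adj x y :=
    match x, y with
    | Sum.inl e, Sum.inr T => ∀ v : Fin n, v ∈ (e : Sym2 (Fin n)) → v ∈ T.1
    | Sum.inr T, Sum.inl e => ∀ v : Fin n, v ∈ (e : Sym2 (Fin n)) → v ∈ T.1
    | _, _ => False
  symm := ⟨by rintro (e | T) (f | S) h <;> exact h⟩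
  loopless := ⟨by rintro (e | T) h <;> exact h⟩

section Infra
variable {n : ℕ} {Γ : SimpleGraph (Fin n)}

/-- projection from the free group -/
def pr (Γ : SimpleGraph (Fin n)) : FreeGroup (PBIdx n) →* GPB Γ :=
  QuotientGroup.mk' _

lemma rel_one {w : FreeGroup (PBIdx n)} (hw : w ∈ graphicRels Γ) : pr Γ w = 1 :=
  (QuotientGroup.eq_one_iff _).mpr (Subgroup.subset_normalClosure hw)

lemma comm_of_rel {x y : FreeGroup (PBIdx n)} (hw : ⁅x, y⁆ ∈ graphicRels Γ) :
    Commute (pr Γ x) (pr Γ y) := by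
  have h := rel_one (Γ := Γ) hw
  rw [map_commutatorElement] at h
  exact commutatorElement_eq_one_iff_commute.mp h

lemma agen_eq {i j : Fin n} (h : i < j) : agen Γ h = pr Γ (ofIdx h) := rfl

lemma dead {i j : Fin n} (h : i < j) (hne : ¬ Γ.Adj i j) : agen Γ h = 1 :=
  rel_one (Or.inr ⟨⟨(i, j), h⟩, hne, rfl⟩)

lemma comm_f1 {i j r s : Fin n} (hij : i < j) (hrs : r < s)
    (hcond : s < i ∨ (i < r ∧ s < j)) :
    Commute (agen Γ hij) (agen Γ hrs) :=
  comm_of_rel (Or.inl (Or.inl (Or.inl ⟨i, j, r, s, hij, hrs, hcond, rfl⟩)))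

lemma comm_f2 {r i s j : Fin n} (hri : r < i) (his : i < s) (hsj : s < j) :
    Commute (agen Γ (his.trans hsj)) (agen Γ hsj * agen Γ (hri.trans his) * (agen Γ hsj)⁻¹) := by
  have h := comm_of_rel (Γ := Γ)
    (Or.inl (Or.inl (Or.inr ⟨r, i, s, j, hri, his, hsj, rfl⟩)))
  simpa [agen_eq, map_mul, map_inv] using h

lemma comm_f3a {i j r : Fin n} (hij : i < j) (hjr : j < r) :
    Commute (agen Γ hij * agen Γ (hij.trans hjr)) (agen Γ hjr) := by
  have h := comm_of_rel (Γ := Γ)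
    (Or.inl (Or.inr ⟨i, j, r, hij, hjr, Or.inl rfl⟩))
  simpa [agen_eq, map_mul] using h

lemma comm_f3b {i j r : Fin n} (hij : i < j) (hjr : j < r) :
    Commute (agen Γ hij) (agen Γ (hij.trans hjr) * agen Γ hjr) := by
  have h := comm_of_rel (Γ := Γ)
    (Or.inl (Or.inr ⟨i, j, r, hij, hjr, Or.inr rfl⟩))
  simpa [agen_eq, map_mul] using h

end Infra

section AbstractGroup

variable {G : Type*} [Group G]

lemma tri_cyc {a b c : G} (h2 : Commute a (b * c)) : a * b * c = b * c * a := by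
  rw [mul_assoc]; exact h2.eq

lemma tri_cyc' {a b c : G} (h1 : Commute c (a * b)) : a * b * c = c * (a * b) :=
  h1.eq.symm

lemma tri_delta_comm_a {a b c : G} (h1 : Commute c (a * b)) (h2 : Commute a (b * c)) :
    Commute (a * b * c) a := by
  rw [tri_cyc h2]
  exact h2.symm.mul_left (Commute.refl a)

lemma tri_delta_comm_c {a b c : G} (h1 : Commute c (a * b)) (h2 : Commute a (b * c)) :
    Commute (a * b * c) c := by
  rw [tri_cyc' h1]
  exact (Commute.refl c).mul_left h1.symm

lemma tri_delta_comm_b {a b c : G} (h1 : Commute c (a * b)) (h2 : Commute a (b * c)) :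
    Commute (a * b * c) b := by
  have ha := tri_delta_comm_a h1 h2
  have hc := tri_delta_comm_c h1 h2
  have h := (ha.inv_right.mul_right (Commute.refl (a * b * c))).mul_right hc.inv_right
  have e : a⁻¹ * (a * b * c) * c⁻¹ = b := by group
  rwa [e] at h

lemma tri_a_eq (a b c : G) : a = (a * b * c) * (b * c)⁻¹ := by group

lemma tri_b_eq {a b c : G} (h2 : Commute a (b * c)) : b = (a * b * c) * (c * a)⁻¹ := by
  rw [tri_cyc h2]; group

lemma tri_c_eq {a b c : G} (h1 : Commute c (a * b)) : c = (a * b * c) * (a * b)⁻¹ := by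
  rw [tri_cyc' h1]; group

/-- conjugation formula: if `g = Δ * w⁻¹` with `Δ` commuting with `x` and `w`, then
conjugation by `g` on `x` equals conjugation by `w⁻¹`. -/
lemma conj_formula {Δ w g x : G} (hg : g = Δ * w⁻¹) (hx : Commute Δ x) (hw : Commute Δ w) :
    g * x * g⁻¹ = w⁻¹ * x * w ∧ g⁻¹ * x * g = w * x * w⁻¹ := by
  constructor
  · have hC : Commute Δ (w⁻¹ * x * w) := (hw.inv_right.mul_right hx).mul_right hw
    have e1 : g * x * g⁻¹ = Δ * (w⁻¹ * x * w) * Δ⁻¹ := by rw [hg]; group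
    rw [e1, hC.eq, mul_inv_cancel_right]
  · have e1 : g⁻¹ * x * g = w * (Δ⁻¹ * x * Δ) * w⁻¹ := by rw [hg]; group
    have e2 : Δ⁻¹ * x * Δ = x := by rw [hx.inv_left.eq, inv_mul_cancel_right]
    rw [e1, e2]

lemma L_dir {σ g3 g5 : G} (hα : Commute g5 (g3 * σ * g3⁻¹)) (h2 : Commute σ g3) :
    Commute σ g5 := by
  have e : g3 * σ * g3⁻¹ = σ := by rw [h2.symm.eq, mul_inv_cancel_right]
  rw [e] at hα; exact hα.symm

lemma L_swap {σ g3 g5 : G} (hα : Commute g5 (g3 * σ * g3⁻¹)) (h2 : Commute g5 g3) :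
    Commute σ g5 := by
  have h : Commute g5 (g3⁻¹ * (g3 * σ * g3⁻¹) * g3) := (h2.inv_right.mul_right hα).mul_right h2
  have e : g3⁻¹ * (g3 * σ * g3⁻¹) * g3 = σ := by group
  rw [e] at h; exact h.symm

lemma L_c4 {σ g2 g3 g5 : G} (hα : Commute g5 (g3 * σ * g3⁻¹))
    (r1 : Commute (σ * g2) g3) (r2 : Commute σ (g2 * g3)) (h25 : Commute g2 g5) :
    Commute σ g5 := by
  have hg : g3 = (σ * g2 * g3) * (σ * g2)⁻¹ := tri_c_eq r1.symm
  have hΔσ : Commute (σ * g2 * g3) σ := tri_delta_comm_a r1.symm r2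
  have hΔw : Commute (σ * g2 * g3) (σ * g2) := hΔσ.mul_right (tri_delta_comm_b r1.symm r2)
  have hconj := (conj_formula hg hΔσ hΔw).1
  have e2 : (σ * g2)⁻¹ * σ * (σ * g2) = g2⁻¹ * σ * g2 := by group
  rw [hconj, e2] at hα
  have h : Commute g5 (g2 * (g2⁻¹ * σ * g2) * g2⁻¹) :=
    (h25.symm.mul_right hα).mul_right h25.symm.inv_right
  have e3 : g2 * (g2⁻¹ * σ * g2) * g2⁻¹ = σ := by group
  rw [e3] at h; exact h.symm

lemma L2_a {σ g3 g5 : G} (hβ : Commute σ (g3 * g5 * g3⁻¹)) (h2 : Commute σ g3) :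
    Commute σ g5 := by
  have h : Commute σ (g3⁻¹ * (g3 * g5 * g3⁻¹) * g3) := (h2.inv_right.mul_right hβ).mul_right h2
  have e : g3⁻¹ * (g3 * g5 * g3⁻¹) * g3 = g5 := by group
  rwa [e] at h

lemma L2_b {σ g3 g5 : G} (hβ : Commute σ (g3 * g5 * g3⁻¹)) (h35 : Commute g3 g5) :
    Commute σ g5 := by
  have e : g3 * g5 * g3⁻¹ = g5 := by rw [h35.eq, mul_inv_cancel_right]
  rwa [e] at hβ

lemma L2_c4 {σ g5 g4 g3 : G} (hβ : Commute σ (g3 * g5 * g3⁻¹))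
    (r1 : Commute (g5 * g4) g3) (r2 : Commute g5 (g4 * g3)) (hps : Commute σ g4) :
    Commute σ g5 := by
  have hg : g3 = (g5 * g4 * g3) * (g5 * g4)⁻¹ := tri_c_eq r1.symm
  have hΔx : Commute (g5 * g4 * g3) g5 := tri_delta_comm_a r1.symm r2
  have hΔw : Commute (g5 * g4 * g3) (g5 * g4) := hΔx.mul_right (tri_delta_comm_b r1.symm r2)
  have hconj := (conj_formula hg hΔx hΔw).1
  have e2 : (g5 * g4)⁻¹ * g5 * (g5 * g4) = g4⁻¹ * g5 * g4 := by group
  rw [hconj, e2] at hβ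
  have h : Commute σ (g4 * (g4⁻¹ * g5 * g4) * g4⁻¹) := (hps.mul_right hβ).mul_right hps.inv_right
  have e3 : g4 * (g4⁻¹ * g5 * g4) * g4⁻¹ = g5 := by group
  rwa [e3] at h

lemma SA_eq {b h m : G} (hrel : Commute h (m * b * m⁻¹)) :
    b * h * b⁻¹ = (b * m * b⁻¹) * (m⁻¹ * h * m) * (b * m * b⁻¹)⁻¹ ∧
    b⁻¹ * h * b = (b⁻¹ * m * b) * (m⁻¹ * h * m) * (b⁻¹ * m * b)⁻¹ := by
  have hc : Commute b (m⁻¹ * h * m) := by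
    have e := hrel.symm.eq
    have e2 : m * (b * (m⁻¹ * h * m)) * m⁻¹ = m * ((m⁻¹ * h * m) * b) * m⁻¹ := by
      calc m * (b * (m⁻¹ * h * m)) * m⁻¹ = (m * b * m⁻¹) * h := by group
        _ = h * (m * b * m⁻¹) := e
        _ = m * ((m⁻¹ * h * m) * b) * m⁻¹ := by group
    exact mul_left_cancel (mul_right_cancel e2)
  constructor
  · have e1 : (b * m * b⁻¹) * (m⁻¹ * h * m) * (b * m * b⁻¹)⁻¹
        = b * m * (b⁻¹ * (m⁻¹ * h * m) * b) * m⁻¹ * b⁻¹ := by group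
    have e2 : b⁻¹ * (m⁻¹ * h * m) * b = m⁻¹ * h * m := by
      rw [hc.inv_left.eq, inv_mul_cancel_right]
    rw [e1, e2]; group
  · have e1 : (b⁻¹ * m * b) * (m⁻¹ * h * m) * (b⁻¹ * m * b)⁻¹
        = b⁻¹ * m * (b * (m⁻¹ * h * m) * b⁻¹) * m⁻¹ * b := by group
    have e2 : b * (m⁻¹ * h * m) * b⁻¹ = m⁻¹ * h * m := by
      rw [hc.eq, mul_inv_cancel_right]
    rw [e1, e2]; group

lemma SB_eq {b h m : G} (hrel : Commute b (m * h * m⁻¹)) :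
    b * h * b⁻¹ = (b * m * b⁻¹)⁻¹ * (m * h * m⁻¹) * (b * m * b⁻¹) ∧
    b⁻¹ * h * b = (b⁻¹ * m * b)⁻¹ * (m * h * m⁻¹) * (b⁻¹ * m * b) := by
  constructor
  · have e1 : (b * m * b⁻¹)⁻¹ * (m * h * m⁻¹) * (b * m * b⁻¹)
        = b * m⁻¹ * (b⁻¹ * (m * h * m⁻¹) * b) * m * b⁻¹ := by group
    have e2 : b⁻¹ * (m * h * m⁻¹) * b = m * h * m⁻¹ := by
      rw [hrel.inv_left.eq, inv_mul_cancel_right]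
    rw [e1, e2]; group
  · have e1 : (b⁻¹ * m * b)⁻¹ * (m * h * m⁻¹) * (b⁻¹ * m * b)
        = b⁻¹ * m⁻¹ * (b * (m * h * m⁻¹) * b⁻¹) * m * b := by group
    have e2 : b * (m * h * m⁻¹) * b⁻¹ = m * h * m⁻¹ := by
      rw [hrel.eq, mul_inv_cancel_right]
    rw [e1, e2]; group

lemma conj_mem {S : Set G} {u v : G}
    (hu : u ∈ Subgroup.closure S) (hv : v ∈ Subgroup.closure S) :
    u⁻¹ * v * u ∈ Subgroup.closure S ∧ u * v * u⁻¹ ∈ Subgroup.closure S :=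
  ⟨mul_mem (mul_mem (inv_mem hu) hv) hu, mul_mem (mul_mem hu hv) (inv_mem hu)⟩

end AbstractGroup

section Catalog
variable {n : ℕ} {Γ : SimpleGraph (Fin n)}

/-- linked pattern `r < p < s < q`, with one mixed non-edge. -/
lemma comm_L1 {r p s q : Fin n} (hrp : r < p) (hps : p < s) (hsq : s < q)
    (hdead : ¬Γ.Adj r p ∨ ¬Γ.Adj r q ∨ ¬Γ.Adj s p ∨ ¬Γ.Adj s q) :
    Commute (agen Γ (hrp.trans hps)) (agen Γ (hps.trans hsq)) := by
  have hrs : r < s := hrp.trans hps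
  have hpq : p < q := hps.trans hsq
  have hα := comm_f2 (Γ := Γ) hrp hps hsq
  -- hα : Commute (A p q) (A s q * A r s * (A s q)⁻¹)
  rcases hdead with h4 | h2 | h3 | h1
  · -- ¬Adj r p
    have d : agen Γ hrp = 1 := dead hrp h4
    have h25 := comm_f3a (Γ := Γ) hrp hpq
    rw [d, one_mul] at h25
    -- h25 : Commute (A r q) (A p q)
    have r1 := comm_f3a (Γ := Γ) hrs hsq
    have r2 := comm_f3b (Γ := Γ) hrs hsq
    exact L_c4 hα r1 r2 h25
  · -- ¬Adj r q
    have d : agen Γ (hrs.trans hsq) = 1 := dead _ h2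
    have r2 := comm_f3b (Γ := Γ) hrs hsq
    rw [d, one_mul] at r2
    exact L_dir hα r2
  · -- ¬Adj s p  (kills A p s)
    have d : agen Γ hps = 1 := dead hps (fun hh => h3 hh.symm)
    have t := comm_f3a (Γ := Γ) hps hsq
    rw [d, one_mul] at t
    exact L_swap hα t
  · -- ¬Adj s q
    have d : agen Γ hsq = 1 := dead hsq h1
    rw [d, one_mul, inv_one, mul_one] at hα
    exact hα.symm

/-- linked pattern `p < r < q < s`, with one mixed non-edge. -/
lemma comm_L2 {p r q s : Fin n} (hpr : p < r) (hrq : r < q) (hqs : q < s)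
    (hdead : ¬Γ.Adj r p ∨ ¬Γ.Adj r q ∨ ¬Γ.Adj s p ∨ ¬Γ.Adj s q) :
    Commute (agen Γ (hrq.trans hqs)) (agen Γ (hpr.trans hrq)) := by
  have hrs : r < s := hrq.trans hqs
  have hpq : p < q := hpr.trans hrq
  have hps : p < s := hpq.trans hqs
  have hβ := comm_f2 (Γ := Γ) hpr hrq hqs
  -- hβ : Commute (A r s) (A q s * A p q * (A q s)⁻¹)
  rcases hdead with h4 | h2 | h3 | h1
  · -- ¬Adj r p  (cond 4)
    have d : agen Γ hpr = 1 := dead hpr (fun hh => h4 hh.symm)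
    have t := comm_f3a (Γ := Γ) hpr hrs
    rw [d, one_mul] at t
    -- t : Commute (A p s) (A r s)
    have r1 := comm_f3a (Γ := Γ) hpq hqs
    have r2 := comm_f3b (Γ := Γ) hpq hqs
    exact L2_c4 hβ r1 r2 t.symm
  · -- ¬Adj r q
    have d : agen Γ hrq = 1 := dead hrq h2
    have t := comm_f3a (Γ := Γ) hrq hqs
    rw [d, one_mul] at t
    exact L2_a hβ t
  · -- ¬Adj s p  (kills A p s)
    have d : agen Γ hps = 1 := dead hps (fun hh => h3 hh.symm)
    have t := comm_f3a (Γ := Γ) hpq hqs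
    rw [d, mul_one] at t
    exact L2_b hβ t.symm
  · -- ¬Adj s q
    have d : agen Γ hqs = 1 := dead hqs (fun hh => h1 hh.symm)
    rw [d, one_mul, inv_one, mul_one] at hβ
    exact hβ

/-- disjoint pair with a mixed non-edge commutes. -/
lemma comm_disjoint {r s p q : Fin n} (hrs : r < s) (hpq : p < q)
    (hpr : p ≠ r) (hps : p ≠ s) (hqr : q ≠ r) (hqs : q ≠ s)
    (hdead : ¬Γ.Adj r p ∨ ¬Γ.Adj r q ∨ ¬Γ.Adj s p ∨ ¬Γ.Adj s q) :
    Commute (agen Γ hrs) (agen Γ hpq) := by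
  rcases lt_trichotomy q r with hh | hh | hh1
  · exact comm_f1 hrs hpq (Or.inl hh)
  · exact absurd hh hqr
  rcases lt_trichotomy q s with hh2 | hh | hh2
  · rcases lt_trichotomy p r with hh3 | hh | hh3
    · exact comm_L2 hh3 hh1 hh2 hdead
    · exact absurd hh hpr
    · exact comm_f1 hrs hpq (Or.inr ⟨hh3, hh2⟩)
  · exact absurd hh hqs
  rcases lt_trichotomy p r with hh3 | hh | hh3
  · exact (comm_f1 hpq hrs (Or.inr ⟨hh3, hh2⟩)).symm
  · exact absurd hh hpr
  rcases lt_trichotomy p s with hh4 | hh | hh4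
  · exact comm_L1 hh3 hh4 hh2 hdead
  · exact absurd hh hps
  · exact (comm_f1 hpq hrs (Or.inl hh4)).symm

lemma comm_shared_r₁ {r s z : Fin n} (hrs : r < s) (hrz : r < z) (hzs : z ≠ s)
    (hd : ¬Γ.Adj s z) : Commute (agen Γ hrs) (agen Γ hrz) := by
  rcases lt_trichotomy z s with h | h | h
  · have d : agen Γ h = 1 := dead h (fun hh => hd hh.symm)
    have t := comm_f3b (Γ := Γ) hrz h
    rw [d, mul_one] at t
    exact t.symm
  · exact absurd h hzs
  · have d : agen Γ h = 1 := dead h hd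
    have t := comm_f3b (Γ := Γ) hrs h
    rw [d, mul_one] at t
    exact t
lemma comm_shared_r₂ {r s z : Fin n} (hrs : r < s) (hzr : z < r)
    (hd : ¬Γ.Adj s z) : Commute (agen Γ hrs) (agen Γ hzr) := by
  have d : agen Γ (hzr.trans hrs) = 1 := dead _ (fun hh => hd hh.symm)
  have t := comm_f3b (Γ := Γ) hzr hrs
  rw [d, one_mul] at t
  exact t.symm
lemma comm_shared_s₁ {r s z : Fin n} (hrs : r < s) (hsz : s < z)
    (hd : ¬Γ.Adj r z) : Commute (agen Γ hrs) (agen Γ hsz) := by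
  have d : agen Γ (hrs.trans hsz) = 1 := dead _ hd
  have t := comm_f3a (Γ := Γ) hrs hsz
  rw [d, mul_one] at t
  exact t
lemma comm_shared_s₂ {r s z : Fin n} (hrs : r < s) (hzs : z < s) (hzr : z ≠ r)
    (hd : ¬Γ.Adj r z) : Commute (agen Γ hrs) (agen Γ hzs) := by
  rcases lt_trichotomy z r with h | h | h
  · have d : agen Γ h = 1 := dead h (fun hh => hd hh.symm)
    have t := comm_f3a (Γ := Γ) h hrs
    rw [d, one_mul] at t
    exact t.symm
  · exact absurd h hzr
  · have d : agen Γ h = 1 := dead h hd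
    have t := comm_f3a (Γ := Γ) h hzs
    rw [d, one_mul] at t
    exact t

/-- the unified "good pair" commutation lemma. -/
lemma comm_good {r s : Fin n} (hrs : r < s) (ers : Γ.Adj r s) {p q : Fin n} (hpq : p < q)
    (t : Fin n) (ht : (t = s ∨ t = r)) (htp : t ≠ p) (htq : t ≠ q)
    (hgood : ¬Γ.Adj t p ∨ ¬Γ.Adj t q) :
    Commute (agen Γ hrs) (agen Γ hpq) := by
  rcases ht with rfl | rfl
  · -- t = s and t ∉ {p,q}; r may be in {p,q}
    by_cases hrp : r = p
    · subst hrp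
      have hd : ¬Γ.Adj t q := by
        rcases hgood with h | h
        · exact absurd ers.symm h
        · exact h
      exact comm_shared_r₁ hrs hpq (Ne.symm htq) hd
    · by_cases hrq : r = q
      · subst hrq
        have hd : ¬Γ.Adj t p := by
          rcases hgood with h | h
          · exact h
          · exact absurd ers.symm h
        exact comm_shared_r₂ hrs hpq hd
      · exact comm_disjoint hrs hpq (fun hh => hrp hh.symm) (fun hh => htp hh.symm)
          (fun hh => hrq hh.symm) (fun hh => htq hh.symm)
          (by rcases hgood with h | h
              · exact Or.inr (Or.inr (Or.inl h))
              · exact Or.inr (Or.inr (Or.inr h)))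
  · -- t = r and t ∉ {p,q}; s may be in {p,q}
    by_cases hsp : s = p
    · subst hsp
      have hd : ¬Γ.Adj t q := by
        rcases hgood with h | h
        · exact absurd ers h
        · exact h
      exact comm_shared_s₁ hrs hpq hd
    · by_cases hsq : s = q
      · subst hsq
        have hd : ¬Γ.Adj t p := by
          rcases hgood with h | h
          · exact h
          · exact absurd ers h
        exact comm_shared_s₂ hrs hpq (fun hh => htp hh.symm) hd
      · exact comm_disjoint hrs hpq (fun hh => htp hh.symm) (fun hh => hsp hh.symm)
          (fun hh => htq hh.symm) (fun hh => hsq hh.symm)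
          (by rcases hgood with h | h
              · exact Or.inl h
              · exact Or.inr (Or.inl h))

end Catalog

section Stab
variable {n : ℕ} {Γ : SimpleGraph (Fin n)}

lemma tri_stab_1 {u v t : Fin n} (huv : u < v) (hvt : v < t) {S : Set (GPB Γ)}
    (m2 : agen Γ (huv.trans hvt) ∈ Subgroup.closure S)
    (m3 : agen Γ hvt ∈ Subgroup.closure S) :
    ∀ g : GPB Γ, (g = agen Γ (huv.trans hvt) ∨ g = agen Γ hvt) →
      agen Γ huv * g * (agen Γ huv)⁻¹ ∈ Subgroup.closure S ∧
      (agen Γ huv)⁻¹ * g * agen Γ huv ∈ Subgroup.closure S := by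
  intro g hg
  have r1 := comm_f3a (Γ := Γ) huv hvt
  have r2 := comm_f3b (Γ := Γ) huv hvt
  have dc2 := tri_delta_comm_b r1.symm r2
  have dc3 := tri_delta_comm_c r1.symm r2
  have dcx : Commute (agen Γ huv * agen Γ (huv.trans hvt) * agen Γ hvt) g := by
    rcases hg with rfl | rfl
    · exact dc2
    · exact dc3
  have cf := conj_formula (tri_a_eq (agen Γ huv) (agen Γ (huv.trans hvt)) (agen Γ hvt))
      dcx (dc2.mul_right dc3)
  have mg : g ∈ Subgroup.closure S := by rcases hg with rfl | rfl <;> assumption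
  constructor
  · rw [cf.1]; exact (conj_mem (mul_mem m2 m3) mg).1
  · rw [cf.2]; exact (conj_mem (mul_mem m2 m3) mg).2

lemma tri_stab_2 {u v t : Fin n} (huv : u < v) (hvt : v < t) {S : Set (GPB Γ)}
    (m1 : agen Γ huv ∈ Subgroup.closure S)
    (m3 : agen Γ hvt ∈ Subgroup.closure S) :
    ∀ g : GPB Γ, (g = agen Γ hvt ∨ g = agen Γ huv) →
      agen Γ (huv.trans hvt) * g * (agen Γ (huv.trans hvt))⁻¹ ∈ Subgroup.closure S ∧
      (agen Γ (huv.trans hvt))⁻¹ * g * agen Γ (huv.trans hvt) ∈ Subgroup.closure S := by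
  intro g hg
  have r1 := comm_f3a (Γ := Γ) huv hvt
  have r2 := comm_f3b (Γ := Γ) huv hvt
  have dc1 := tri_delta_comm_a r1.symm r2
  have dc3 := tri_delta_comm_c r1.symm r2
  have dcx : Commute (agen Γ huv * agen Γ (huv.trans hvt) * agen Γ hvt) g := by
    rcases hg with rfl | rfl
    · exact dc3
    · exact dc1
  have cf := conj_formula (tri_b_eq r2) dcx (dc3.mul_right dc1)
  have mg : g ∈ Subgroup.closure S := by rcases hg with rfl | rfl <;> assumption
  constructor
  · rw [cf.1]; exact (conj_mem (mul_mem m3 m1) mg).1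
  · rw [cf.2]; exact (conj_mem (mul_mem m3 m1) mg).2

lemma tri_stab_3 {u v t : Fin n} (huv : u < v) (hvt : v < t) {S : Set (GPB Γ)}
    (m1 : agen Γ huv ∈ Subgroup.closure S)
    (m2 : agen Γ (huv.trans hvt) ∈ Subgroup.closure S) :
    ∀ g : GPB Γ, (g = agen Γ huv ∨ g = agen Γ (huv.trans hvt)) →
      agen Γ hvt * g * (agen Γ hvt)⁻¹ ∈ Subgroup.closure S ∧
      (agen Γ hvt)⁻¹ * g * agen Γ hvt ∈ Subgroup.closure S := by
  intro g hg
  have r1 := comm_f3a (Γ := Γ) huv hvt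
  have r2 := comm_f3b (Γ := Γ) huv hvt
  have dc1 := tri_delta_comm_a r1.symm r2
  have dc2 := tri_delta_comm_b r1.symm r2
  have dcx : Commute (agen Γ huv * agen Γ (huv.trans hvt) * agen Γ hvt) g := by
    rcases hg with rfl | rfl
    · exact dc1
    · exact dc2
  have cf := conj_formula (tri_c_eq r1.symm) dcx (dc1.mul_right dc2)
  have mg : g ∈ Subgroup.closure S := by rcases hg with rfl | rfl <;> assumption
  constructor
  · rw [cf.1]; exact (conj_mem (mul_mem m1 m2) mg).1
  · rw [cf.2]; exact (conj_mem (mul_mem m1 m2) mg).2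

/-- Stability: conjugating any generator with pair `≠ (x,y)` inside the clique
by the (possibly bad) generator `(x,y)` stays in the subgroup generated by the
generators other than `(x,y)`. -/
lemma stab {x y z w : Fin n} (hxy : x < y) (hzw : z < w) {S : Set (GPB Γ)}
    (hS : ∀ (p q : Fin n) (hpq : p < q),
        p ∈ ({x, y, z, w} : Set (Fin n)) → q ∈ ({x, y, z, w} : Set (Fin n)) →
        ¬(p = x ∧ q = y) → agen Γ hpq ∈ S)
    (hne : ¬(z = x ∧ w = y)) :
    agen Γ hxy * agen Γ hzw * (agen Γ hxy)⁻¹ ∈ Subgroup.closure S ∧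
    (agen Γ hxy)⁻¹ * agen Γ hzw * agen Γ hxy ∈ Subgroup.closure S := by
  by_cases eyz : y = z
  · -- pair shape x < y = z < w : triangle (x, y, w)
    subst eyz
    have m2 : agen Γ (hxy.trans hzw) ∈ Subgroup.closure S :=
      Subgroup.subset_closure (hS x w (hxy.trans hzw) (by simp) (by simp)
        (fun hh => (ne_of_gt hzw) hh.2))
    have m3 : agen Γ hzw ∈ Subgroup.closure S :=
      Subgroup.subset_closure (hS y w hzw (by simp) (by simp)
        (fun hh => (ne_of_gt hxy) hh.1))
    exact tri_stab_1 hxy hzw m2 m3 _ (Or.inr rfl)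
  by_cases eyw : y = w
  · -- pair shape z < y, x < y, shared top vertex y
    subst eyw
    have hzx : z ≠ x := fun hh => hne ⟨hh, rfl⟩
    rcases lt_trichotomy x z with hxz | hh | hzx'
    · -- triangle (x, z, y) ; bad edge in middle position (x,y)
      have m1 : agen Γ hxz ∈ Subgroup.closure S :=
        Subgroup.subset_closure (hS x z hxz (by simp) (by simp)
          (fun hh => (ne_of_lt hzw) hh.2))
      have m3 : agen Γ hzw ∈ Subgroup.closure S :=
        Subgroup.subset_closure (hS z y hzw (by simp) (by simp)
          (fun hh => hzx hh.1))
      exact tri_stab_2 hxz hzw m1 m3 _ (Or.inl rfl)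
    · exact absurd hh.symm hzx
    · -- triangle (z, x, y) ; bad edge in top position (x,y)
      have m1 : agen Γ hzx' ∈ Subgroup.closure S :=
        Subgroup.subset_closure (hS z x hzx' (by simp) (by simp)
          (fun hh => (ne_of_lt hxy) hh.2))
      have m2 : agen Γ (hzx'.trans hxy) ∈ Subgroup.closure S :=
        Subgroup.subset_closure (hS z y (hzx'.trans hxy) (by simp) (by simp)
          (fun hh => hzx hh.1))
      exact tri_stab_3 hzx' hxy m1 m2 _ (Or.inr rfl)
  by_cases exz : x = z
  · -- shared bottom vertex x
    subst exz
    have hwy : w ≠ y := fun hh => hne ⟨rfl, hh⟩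
    rcases lt_trichotomy y w with hyw | hh | hwy'
    · -- triangle (x, y, w), bad edge bottom (x,y), target top (x,w)
      have m2 : agen Γ (hxy.trans hyw) ∈ Subgroup.closure S :=
        Subgroup.subset_closure (hS x w (hxy.trans hyw) (by simp) (by simp)
          (fun hh => hwy hh.2))
      have m3 : agen Γ hyw ∈ Subgroup.closure S :=
        Subgroup.subset_closure (hS y w hyw (by simp) (by simp)
          (fun hh => (ne_of_gt hxy) hh.1))
      exact tri_stab_1 hxy hyw m2 m3 _ (Or.inl rfl)
    · exact absurd hh.symm hwy
    · -- triangle (x, w, y), bad edge is the middle (x,y), target bottom (x,w)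
      have m1 : agen Γ hzw ∈ Subgroup.closure S :=
        Subgroup.subset_closure (hS x w hzw (by simp) (by simp)
          (fun hh => hwy hh.2))
      have m3 : agen Γ hwy' ∈ Subgroup.closure S :=
        Subgroup.subset_closure (hS w y hwy' (by simp) (by simp)
          (fun hh => (ne_of_gt hzw) hh.1))
      exact tri_stab_2 hzw hwy' m1 m3 _ (Or.inr rfl)
  by_cases exw : x = w
  · -- shared vertex x = w : z < x < y, triangle (z, x, y), bad edge top? no: bad = (x,y) = (v,t) position
    subst exw
    have m1 : agen Γ hzw ∈ Subgroup.closure S :=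
      Subgroup.subset_closure (hS z x hzw (by simp) (by simp)
        (fun hh => (ne_of_lt hxy) hh.2))
    have m2 : agen Γ (hzw.trans hxy) ∈ Subgroup.closure S :=
      Subgroup.subset_closure (hS z y (hzw.trans hxy) (by simp) (by simp)
        (fun hh => (ne_of_lt hzw) hh.1))
    exact tri_stab_3 hzw hxy m1 m2 _ (Or.inl rfl)
  -- now all four vertices distinct
  have mh : agen Γ hzw ∈ Subgroup.closure S :=
    Subgroup.subset_closure (hS z w hzw (by simp) (by simp) hne)
  have unl : Commute (agen Γ hxy) (agen Γ hzw) →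
      (agen Γ hxy * agen Γ hzw * (agen Γ hxy)⁻¹ ∈ Subgroup.closure S ∧
       (agen Γ hxy)⁻¹ * agen Γ hzw * agen Γ hxy ∈ Subgroup.closure S) := by
    intro hc
    constructor
    · rw [hc.eq, mul_inv_cancel_right]; exact mh
    · rw [hc.inv_left.eq, inv_mul_cancel_right]; exact mh
  rcases lt_trichotomy z x with hzx | hh | hxz
  · rcases lt_trichotomy w x with hwx | hh | hxw
    · -- z < w < x < y : separated
      exact unl (comm_f1 hxy hzw (Or.inl hwx))
    · exact absurd hh.symm exw
    · rcases lt_trichotomy w y with hwy | hh | hyw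
      · -- z < x < w < y : linked, SB pattern
        have hrel := comm_f2 (Γ := Γ) hzx hxw hwy
        have e1 : agen Γ (hxw.trans hwy) = agen Γ hxy := rfl
        have e2 : agen Γ (hzx.trans hxw) = agen Γ hzw := rfl
        rw [e1, e2] at hrel
        have sb := SB_eq hrel
        have m_xw : agen Γ hxw ∈ Subgroup.closure S :=
          Subgroup.subset_closure (hS x w hxw (by simp) (by simp)
            (fun hh => (ne_of_lt hwy) hh.2))
        have m_wy : agen Γ hwy ∈ Subgroup.closure S :=
          Subgroup.subset_closure (hS w y hwy (by simp) (by simp)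
            (fun hh => (ne_of_gt hxw) hh.1))
        have m_zy : agen Γ (hzw.trans hwy) ∈ Subgroup.closure S :=
          Subgroup.subset_closure (hS z y (hzw.trans hwy) (by simp) (by simp)
            (fun hh => exz hh.1.symm))
        have t2 := tri_stab_2 hxw hwy m_xw m_wy (agen Γ hwy) (Or.inl rfl)
        have t3 := tri_stab_3 hzw hwy mh m_zy (agen Γ hzw) (Or.inl rfl)
        constructor
        · rw [sb.1]
          exact mul_mem (mul_mem (inv_mem t2.1) t3.1) t2.1
        · rw [sb.2]
          exact mul_mem (mul_mem (inv_mem t2.2) t3.1) t2.2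
      · exact absurd hh.symm eyw
      · -- z < x < y < w : b nested inside h
        exact unl (comm_f1 hzw hxy (Or.inr ⟨hzx, hyw⟩)).symm
  · exact absurd hh.symm exz
  · rcases lt_trichotomy z y with hzy | hh | hyz
    · rcases lt_trichotomy w y with hwy | hh | hyw
      · -- x < z < w < y : h nested inside b
        exact unl (comm_f1 hxy hzw (Or.inr ⟨hxz, hwy⟩))
      · exact absurd hh.symm eyw
      · -- x < z < y < w : linked, SA pattern
        have hrel := comm_f2 (Γ := Γ) hxz hzy hyw
        have e1 : agen Γ (hzy.trans hyw) = agen Γ hzw := rfl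
        have e2 : agen Γ (hxz.trans hzy) = agen Γ hxy := rfl
        rw [e1, e2] at hrel
        have sa := SA_eq hrel
        have m_xw : agen Γ (hxy.trans hyw) ∈ Subgroup.closure S :=
          Subgroup.subset_closure (hS x w (hxy.trans hyw) (by simp) (by simp)
            (fun hh => (ne_of_gt hyw) hh.2))
        have m_yw : agen Γ hyw ∈ Subgroup.closure S :=
          Subgroup.subset_closure (hS y w hyw (by simp) (by simp)
            (fun hh => (ne_of_gt hxy) hh.1))
        have m_zy : agen Γ hzy ∈ Subgroup.closure S :=
          Subgroup.subset_closure (hS z y hzy (by simp) (by simp)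
            (fun hh => (ne_of_gt hxz) hh.1))
        have mh' : agen Γ (hzy.trans hyw) ∈ Subgroup.closure S := mh
        have t1 := tri_stab_1 hxy hyw m_xw m_yw (agen Γ hyw) (Or.inr rfl)
        have t3 := tri_stab_3 hzy hyw m_zy mh' (agen Γ hzw) (Or.inr (by rfl))
        constructor
        · rw [sa.1]
          exact mul_mem (mul_mem t1.1 t3.2) (inv_mem t1.1)
        · rw [sa.2]
          exact mul_mem (mul_mem t1.2 t3.2) (inv_mem t1.2)
    · exact absurd hh.symm eyz
    · -- x < y < z < w : separated
      exact unl (comm_f1 hzw hxy (Or.inl hyz)).symm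

end Stab


section GU

variable {G : Type*} [Group G]

/-- Master reduction: if `σ` commutes with all elements of `S`, conjugates of `S` by `B`
stay in `⟨S⟩` and commutators of `B`-elements lie in `⟨S⟩`, then `σ` commutes with the
commutator subgroup of `⟨S ∪ B⟩`. -/
lemma GU (σ : G) (S B : Set G)
    (ha : ∀ h ∈ S, Commute σ h)
    (hb : ∀ b ∈ B, ∀ h ∈ S,
        b * h * b⁻¹ ∈ Subgroup.closure S ∧ b⁻¹ * h * b ∈ Subgroup.closure S)
    (hc : ∀ b ∈ B, ∀ b' ∈ B, ⁅b, b'⁆ ∈ Subgroup.closure S) :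
    ∀ x ∈ ⁅Subgroup.closure (S ∪ B), Subgroup.closure (S ∪ B)⁆, Commute σ x := by
  set K := Subgroup.closure S with hK
  have hσK : ∀ x ∈ K, Commute σ x := by
    intro x hx
    induction hx using Subgroup.closure_induction with
    | mem g hg => exact ha g hg
    | one => exact Commute.one_right σ
    | mul g₁ g₂ _ _ i₁ i₂ => exact i₁.mul_right i₂
    | inv g _ i => exact i.inv_right
  have dir : ∀ (b : G), (∀ h ∈ S, b * h * b⁻¹ ∈ K) → ∀ h ∈ K, b * h * b⁻¹ ∈ K := by
    intro b hbS h hh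
    induction hh using Subgroup.closure_induction with
    | mem x hx => exact hbS x hx
    | one => simpa using K.one_mem
    | mul x y hx hy ix iy =>
        have e : b * (x * y) * b⁻¹ = (b * x * b⁻¹) * (b * y * b⁻¹) := by group
        rw [e]; exact mul_mem ix iy
    | inv x hx ix =>
        have e : b * x⁻¹ * b⁻¹ = (b * x * b⁻¹)⁻¹ := by group
        rw [e]; exact inv_mem ix
  have hnorm : Subgroup.closure (S ∪ B) ≤ Subgroup.normalizer (K : Set G) := by
    rw [Subgroup.closure_le]
    rintro g (hgS | hgB)
    · exact Subgroup.le_normalizer (Subgroup.subset_closure hgS)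
    · rw [SetLike.mem_coe, Subgroup.mem_normalizer_iff]
      intro h
      constructor
      · intro hh; exact dir g (fun h' hh' => (hb g hgB h' hh').1) h hh
      · intro hh
        have h2 := dir g⁻¹ (fun h' hh' => by simpa using (hb g hgB h' hh').2) _ hh
        simpa [mul_assoc] using h2
  have hcnorm : ∀ g ∈ Subgroup.closure (S ∪ B), ∀ u ∈ K, g * u * g⁻¹ ∈ K := by
    intro g hg u hu
    exact (Subgroup.mem_normalizer_iff.mp (hnorm hg) u).mp hu
  have base : ∀ g₁ ∈ S ∪ B, ∀ g₂ ∈ S ∪ B, ⁅g₁, g₂⁆ ∈ K := by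
    rintro g₁ (h1 | h1) g₂ (h2 | h2)
    · rw [commutatorElement_def]
      exact mul_mem (mul_mem (mul_mem (Subgroup.subset_closure h1) (Subgroup.subset_closure h2))
        (inv_mem (Subgroup.subset_closure h1))) (inv_mem (Subgroup.subset_closure h2))
    · have e : ⁅g₁, g₂⁆ = ((g₂ * g₁ * g₂⁻¹) * g₁⁻¹)⁻¹ := by
        rw [commutatorElement_def]; group
      rw [e]
      exact inv_mem (mul_mem (hb g₂ h2 g₁ h1).1 (inv_mem (Subgroup.subset_closure h1)))
    · have e : ⁅g₁, g₂⁆ = (g₁ * g₂ * g₁⁻¹) * g₂⁻¹ := by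
        rw [commutatorElement_def]
      rw [e]
      exact mul_mem (hb g₁ h1 g₂ h2).1 (inv_mem (Subgroup.subset_closure h2))
    · exact hc g₁ h1 g₂ h2
  have step : ∀ g₂, ∀ _ : g₂ ∈ Subgroup.closure (S ∪ B), ∀ g₁ ∈ S ∪ B, ⁅g₁, g₂⁆ ∈ K := by
    intro g₂ hg₂
    induction hg₂ using Subgroup.closure_induction with
    | mem x hx => exact fun g₁ h1 => base g₁ h1 x hx
    | one => intro g₁ _; simpa using K.one_mem
    | mul x y hx hy ix iy =>
        intro g₁ h1
        have e : ⁅g₁, x * y⁆ = ⁅g₁, x⁆ * (x * ⁅g₁, y⁆ * x⁻¹) := by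
          simp only [commutatorElement_def]; group
        rw [e]
        exact mul_mem (ix g₁ h1) (hcnorm x hx _ (iy g₁ h1))
    | inv x hx ix =>
        intro g₁ h1
        have e : ⁅g₁, x⁻¹⁆ = x⁻¹ * ⁅g₁, x⁆⁻¹ * x := by
          simp only [commutatorElement_def]; group
        rw [e]
        have h2 := hcnorm x⁻¹ (inv_mem hx) _ (inv_mem (ix g₁ h1))
        simpa [mul_assoc] using h2
  have full : ∀ g₁, ∀ _ : g₁ ∈ Subgroup.closure (S ∪ B), ∀ g₂ ∈ Subgroup.closure (S ∪ B),
      ⁅g₁, g₂⁆ ∈ K := by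
    intro g₁ hg₁
    induction hg₁ using Subgroup.closure_induction with
    | mem x hx => exact fun g₂ h2 => step g₂ h2 x hx
    | one => intro g₂ _; simpa using K.one_mem
    | mul x y hx hy ix iy =>
        intro g₂ h2
        have e : ⁅x * y, g₂⁆ = (x * ⁅y, g₂⁆ * x⁻¹) * ⁅x, g₂⁆ := by
          simp only [commutatorElement_def]; group
        rw [e]
        exact mul_mem (hcnorm x hx _ (iy g₂ h2)) (ix g₂ h2)
    | inv x hx ix =>
        intro g₂ h2
        have e : ⁅x⁻¹, g₂⁆ = x⁻¹ * ⁅x, g₂⁆⁻¹ * x := by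
          simp only [commutatorElement_def]; group
        rw [e]
        have h2' := hcnorm x⁻¹ (inv_mem hx) _ (inv_mem (ix g₂ h2))
        simpa [mul_assoc] using h2'
  intro x hx
  refine hσK x ?_
  exact Subgroup.commutator_le.mpr (fun g₁ h1 g₂ h2 => full g₁ h1 g₂ h2) hx

end GU
section Main
variable {n : ℕ}

lemma nbrs_le_two {Γ : SimpleGraph (Fin n)}
    (hdisj : ∀ C D : Finset (Fin n), Γ.IsNClique 4 C → Γ.IsNClique 4 D → C ≠ D →
      (C ∩ D).card ≤ 2)
    {X : Finset (Fin n)} (hX : Γ.IsNClique 4 X)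
    {t : Fin n} (ht : t ∉ X) {a b c : Fin n} (ha : a ∈ X) (hb : b ∈ X) (hc : c ∈ X)
    (hab : a ≠ b) (hac : a ≠ c) (hbc : b ≠ c)
    (eta : Γ.Adj t a) (etb : Γ.Adj t b) (etc : Γ.Adj t c) : False := by
  have hta : t ≠ a := fun h => ht (h ▸ ha)
  have htb : t ≠ b := fun h => ht (h ▸ hb)
  have htc : t ≠ c := fun h => ht (h ▸ hc)
  have eab : Γ.Adj a b := hX.1 (Finset.mem_coe.mpr ha) (Finset.mem_coe.mpr hb) hab
  have eac : Γ.Adj a c := hX.1 (Finset.mem_coe.mpr ha) (Finset.mem_coe.mpr hc) hac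
  have ebc : Γ.Adj b c := hX.1 (Finset.mem_coe.mpr hb) (Finset.mem_coe.mpr hc) hbc
  have hCcl : Γ.IsNClique 4 (insert t {a, b, c}) := by
    constructor
    · intro u hu v hv huv
      simp only [Finset.coe_insert, Set.mem_insert_iff, Finset.coe_singleton,
        Set.mem_singleton_iff] at hu hv
      rcases hu with rfl | rfl | rfl | rfl <;> rcases hv with rfl | rfl | rfl | rfl <;>
        first
          | exact absurd rfl huv
          | exact eta | exact etb | exact etc | exact eab | exact eac | exact ebc
          | exact eta.symm | exact etb.symm | exact etc.symm
          | exact eab.symm | exact eac.symm | exact ebc.symm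
    · have h3 : ({a, b, c} : Finset (Fin n)).card = 3 := by
        rw [Finset.card_insert_of_notMem (by simp [hab, hac]),
          Finset.card_insert_of_notMem (by simp [hbc]), Finset.card_singleton]
      rw [Finset.card_insert_of_notMem (by simp [hta, htb, htc]), h3]
  have hne : insert t {a, b, c} ≠ X := by
    intro h
    exact ht (h ▸ Finset.mem_insert_self t {a, b, c})
  have hle := hdisj _ X hCcl hX hne
  have hsub : ({a, b, c} : Finset (Fin n)) ⊆ insert t {a, b, c} ∩ X := by
    intro z hz
    rw [Finset.mem_inter]
    refine ⟨Finset.mem_insert_of_mem hz, ?_⟩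
    simp only [Finset.mem_insert, Finset.mem_singleton] at hz
    rcases hz with rfl | rfl | rfl <;> assumption
  have h3' : (3 : ℕ) ≤ (insert t {a, b, c} ∩ X).card := by
    have := Finset.card_le_card hsub
    have h3 : ({a, b, c} : Finset (Fin n)).card = 3 := by
      rw [Finset.card_insert_of_notMem (by simp [hab, hac]),
        Finset.card_insert_of_notMem (by simp [hbc]), Finset.card_singleton]
    omega
  omega

lemma main_aux (Γ : SimpleGraph (Fin n))
    (hdisj : ∀ C D : Finset (Fin n), Γ.IsNClique 4 C → Γ.IsNClique 4 D → C ≠ D →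
      (C ∩ D).card ≤ 2)
    (X : Finset (Fin n)) (hX : Γ.IsNClique 4 X)
    {r s : Fin n} (hrs : r < s) (ers : Γ.Adj r s)
    (t : Fin n) (ht : t = s ∨ t = r) (htX : t ∉ X) :
    ∀ x ∈ ⁅cliqueSubgroup Γ (X : Set (Fin n)), cliqueSubgroup Γ (X : Set (Fin n))⁆,
      Commute (agen Γ hrs) x := by
  classical
  have hGenEq : cliqueSubgroup Γ (X : Set (Fin n)) = Subgroup.closure
      {g : GPB Γ | ∃ p : PBIdx n,
        (p.1.1 ∈ (X : Set (Fin n)) ∧ p.1.2 ∈ (X : Set (Fin n))) ∧ g = PresentedGroup.of p} :=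
    rfl
  by_cases hbp : ∃ u v : Fin n, u ∈ X ∧ v ∈ X ∧ u < v ∧ Γ.Adj t u ∧ Γ.Adj t v
  · obtain ⟨u, v, huX, hvX, huv, hadju, hadjv⟩ := hbp
    have uniq : ∀ z ∈ X, Γ.Adj t z → z = u ∨ z = v := by
      intro z hz hadj
      by_contra hcon
      push_neg at hcon
      exact nbrs_le_two hdisj hX htX huX hvX hz (ne_of_lt huv)
        (fun h => hcon.1 h.symm) (fun h => hcon.2 h.symm) hadju hadjv hadj
    set S : Set (GPB Γ) := {g : GPB Γ | ∃ p : PBIdx n,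
        (p.1.1 ∈ (X : Set (Fin n)) ∧ p.1.2 ∈ (X : Set (Fin n))) ∧ g = PresentedGroup.of p ∧
        ¬(p.1.1 = u ∧ p.1.2 = v)} with hSdef
    set B : Set (GPB Γ) := {agen Γ huv} with hBdef
    have hunion : {g : GPB Γ | ∃ p : PBIdx n,
        (p.1.1 ∈ (X : Set (Fin n)) ∧ p.1.2 ∈ (X : Set (Fin n))) ∧ g = PresentedGroup.of p}
        = S ∪ B := by
      ext g
      constructor
      · rintro ⟨p, hp, rfl⟩
        by_cases hpp : p.1.1 = u ∧ p.1.2 = v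
        · right
          have hpe : p = ⟨(u, v), huv⟩ := Subtype.ext (Prod.ext hpp.1 hpp.2)
          rw [hpe]
          rfl
        · exact Or.inl ⟨p, hp, rfl, hpp⟩
      · rintro (⟨p, hp, hg, _⟩ | hg)
        · exact ⟨p, hp, hg⟩
        · rw [Set.mem_singleton_iff] at hg
          exact ⟨⟨(u, v), huv⟩,
            ⟨Finset.mem_coe.mpr huX, Finset.mem_coe.mpr hvX⟩, hg⟩
    have haS : ∀ h ∈ S, Commute (agen Γ hrs) h := by
      rintro g ⟨p, ⟨hp1, hp2⟩, rfl, hnb⟩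
      have htp : t ≠ p.1.1 := fun h => htX (Finset.mem_coe.mp (h ▸ hp1))
      have htq : t ≠ p.1.2 := fun h => htX (Finset.mem_coe.mp (h ▸ hp2))
      have hgood : ¬Γ.Adj t p.1.1 ∨ ¬Γ.Adj t p.1.2 := by
        by_contra hcon
        push_neg at hcon
        rcases uniq _ (Finset.mem_coe.mp hp1) hcon.1 with h1 | h1 <;>
          rcases uniq _ (Finset.mem_coe.mp hp2) hcon.2 with h2 | h2
        · have hlt := p.2; rw [h1, h2] at hlt; exact absurd hlt (lt_irrefl u)
        · exact hnb ⟨h1, h2⟩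
        · have hlt := p.2; rw [h1, h2] at hlt; exact absurd hlt (not_lt_of_gt huv)
        · have hlt := p.2; rw [h1, h2] at hlt; exact absurd hlt (lt_irrefl v)
      exact comm_good hrs ers p.2 t ht htp htq hgood
    have hbS : ∀ b ∈ B, ∀ h ∈ S,
        b * h * b⁻¹ ∈ Subgroup.closure S ∧ b⁻¹ * h * b ∈ Subgroup.closure S := by
      rintro b hb g ⟨p, ⟨hp1, hp2⟩, rfl, hnb⟩
      rw [Set.mem_singleton_iff] at hb
      subst hb
      have horacle : ∀ (a b : Fin n) (hab : a < b),
          a ∈ ({u, v, p.1.1, p.1.2} : Set (Fin n)) → b ∈ ({u, v, p.1.1, p.1.2} : Set (Fin n)) →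
          ¬(a = u ∧ b = v) → agen Γ hab ∈ S := by
        intro a b hab hma hmb hnb'
        have hmX : ∀ c : Fin n, c ∈ ({u, v, p.1.1, p.1.2} : Set (Fin n)) →
            c ∈ (X : Set (Fin n)) := by
          intro c hcm
          rcases hcm with rfl | rfl | rfl | rfl
          · exact Finset.mem_coe.mpr huX
          · exact Finset.mem_coe.mpr hvX
          · exact hp1
          · exact hp2
        exact ⟨⟨(a, b), hab⟩, ⟨hmX a hma, hmX b hmb⟩, rfl, hnb'⟩
      exact stab huv p.2 horacle hnb
    have hcS : ∀ b ∈ B, ∀ b' ∈ B, ⁅b, b'⁆ ∈ Subgroup.closure S := by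
      rintro b hb b' hb'
      rw [Set.mem_singleton_iff] at hb hb'
      subst hb; subst hb'
      rw [commutatorElement_self]
      exact Subgroup.one_mem _
    intro x hx
    rw [hGenEq, hunion] at hx
    exact GU (agen Γ hrs) S B haS hbS hcS x hx
  · have haS : ∀ h ∈ {g : GPB Γ | ∃ p : PBIdx n,
        (p.1.1 ∈ (X : Set (Fin n)) ∧ p.1.2 ∈ (X : Set (Fin n))) ∧ g = PresentedGroup.of p},
        Commute (agen Γ hrs) h := by
      rintro g ⟨p, ⟨hp1, hp2⟩, rfl⟩
      have htp : t ≠ p.1.1 := fun h => htX (Finset.mem_coe.mp (h ▸ hp1))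
      have htq : t ≠ p.1.2 := fun h => htX (Finset.mem_coe.mp (h ▸ hp2))
      have hgood : ¬Γ.Adj t p.1.1 ∨ ¬Γ.Adj t p.1.2 := by
        by_contra hcon
        push_neg at hcon
        exact hbp ⟨p.1.1, p.1.2, Finset.mem_coe.mp hp1, Finset.mem_coe.mp hp2, p.2,
          hcon.1, hcon.2⟩
      exact comm_good hrs ers p.2 t ht htp htq hgood
    intro x hx
    rw [hGenEq] at hx
    refine GU (agen Γ hrs) _ ∅ haS (fun b hb => absurd hb (Set.notMem_empty b))
      (fun b hb => absurd hb (Set.notMem_empty b)) x ?_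
    rwa [Set.union_empty]

end Main

/-- Suppose the `4`-cliques of `Γ` are almost disjoint (no two distinct
`4`-cliques share more than two vertices). If `X` is a `4`-clique of `Γ` and `{r,s}` is an edge
of `Γ` not contained in `X`, then `a_{rs}` commutes with `[P_X, P_X]` in `P_Γ`. -/
theorem four_clique_commutator_commute {n : ℕ} (Γ : SimpleGraph (Fin n))
    (hdisj : ∀ C D : Finset (Fin n), Γ.IsNClique 4 C → Γ.IsNClique 4 D → C ≠ D →
      (C ∩ D).card ≤ 2)
    (X : Finset (Fin n)) (hX : Γ.IsNClique 4 X)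
    {r s : Fin n} (hrs : r < s) (ers : Γ.Adj r s) (hout : ¬ (r ∈ X ∧ s ∈ X)) :
    ∀ x ∈ ⁅cliqueSubgroup Γ (X : Set (Fin n)), cliqueSubgroup Γ (X : Set (Fin n))⁆,
      Commute (agen Γ hrs) x := by
  by_cases hsX : s ∈ X
  · have hrX : r ∉ X := fun hr => hout ⟨hr, hsX⟩
    exact main_aux Γ hdisj X hX hrs ers r (Or.inr rfl) hrX
  · exact main_aux Γ hdisj X hX hrs ers s (Or.inl rfl) hsX

end GraphicBraid
end

section
/- Let Γ be a finite simple graph with vertex set V = {1, …, n} and edge set E_Γ, let B_n be the braid group, p : B_n → S_n the homomorphism with σ_i ↦ (i, i+1), P_n = ker p the pure braid group with Artin generators a_{ij}, and Aut(Γ) ≤ S_n the subgroup of permutations 𝔰 with {𝔰(i), 𝔰(j)} ∈ E_Γ for all {i,j} ∈ E_Γ. Let N be the normal closure in P_n of {a_{ij} : {i,j} ∉ E_Γ}. Then N is a normal subgroup of B̃_Γ = p^{-1}(Aut(Γ)): for every σ ∈ B_n with p(σ) ∈ Aut(Γ) and every g ∈ N, σ g σ^{-1} ∈ N. -/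
namespace GraphicBraid

open scoped commutatorElement

/-- The braid relators: `σᵢσⱼσᵢ(σⱼσᵢσⱼ)⁻¹` for `j = i+1` and `⁅σᵢ,σⱼ⁆` for `|i-j| ≥ 2`. -/
def braidRels (n : ℕ) : Set (FreeGroup (Fin (n - 1))) :=
  {w | ∃ i j : Fin (n - 1), (i : ℕ) + 1 = (j : ℕ) ∧
      w = FreeGroup.of i * FreeGroup.of j * FreeGroup.of i *
        (FreeGroup.of j * FreeGroup.of i * FreeGroup.of j)⁻¹} ∪
  {w | ∃ i j : Fin (n - 1), ((i : ℕ) + 2 ≤ (j : ℕ) ∨ (j : ℕ) + 2 ≤ (i : ℕ)) ∧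
      w = ⁅FreeGroup.of i, FreeGroup.of j⁆}

/-- The braid group `B_n`, presented with generators `σ₁, …, σ_{n-1}`. -/
abbrev BraidGroup (n : ℕ) : Type := PresentedGroup (braidRels n)

/-- The transposition `(k, k+1)` associated to the braid generator `σ_k`. -/
def swapGen (n : ℕ) (k : Fin (n - 1)) : Equiv.Perm (Fin n) :=
  Equiv.swap ⟨(k : ℕ), lt_of_lt_of_le k.2 (Nat.sub_le n 1)⟩ ⟨(k : ℕ) + 1, by have := k.2; omega⟩

lemma braid_swap_rel {α : Type*} [DecidableEq α] {a b c : α} (hab : a ≠ b) (hbc : b ≠ c)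
    (hac : a ≠ c) :
    Equiv.swap a b * Equiv.swap b c * Equiv.swap a b *
      (Equiv.swap b c * Equiv.swap a b * Equiv.swap b c)⁻¹ = 1 := by
  rw [mul_inv_eq_one]
  have h1 : Equiv.swap b c * Equiv.swap a b * Equiv.swap b c = Equiv.swap c a :=
    Equiv.swap_mul_swap_mul_swap hab hac
  have h2 : Equiv.swap a b * Equiv.swap b c * Equiv.swap a b = Equiv.swap a c := by
    rw [Equiv.swap_comm a b, Equiv.swap_comm b c]
    exact Equiv.swap_mul_swap_mul_swap hbc.symm hac.symm
  rw [h1, h2, Equiv.swap_comm]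

lemma swap_commute_of_ne {α : Type*} [DecidableEq α] {a b c d : α}
    (h1 : a ≠ c) (h2 : a ≠ d) (h3 : b ≠ c) (h4 : b ≠ d) :
    Commute (Equiv.swap a b) (Equiv.swap c d) := by
  apply Equiv.Perm.Disjoint.commute
  intro x
  by_cases hxa : x = a
  · subst hxa; right; exact Equiv.swap_apply_of_ne_of_ne h1 h2
  by_cases hxb : x = b
  · subst hxb; right; exact Equiv.swap_apply_of_ne_of_ne h3 h4
  · left; exact Equiv.swap_apply_of_ne_of_ne hxa hxb

lemma swapGen_rels (n : ℕ) : ∀ r ∈ braidRels n, FreeGroup.lift (swapGen n) r = 1 := by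
  rintro r (⟨i, j, hij, rfl⟩ | ⟨i, j, hij, rfl⟩)
  · have hj2 : (j : ℕ) < n - 1 := j.2
    have hi2 : (i : ℕ) < n - 1 := i.2
    have e2 : swapGen n j =
        Equiv.swap ⟨(i : ℕ) + 1, by omega⟩ ⟨(i : ℕ) + 2, by omega⟩ := by
      unfold swapGen
      congr 1 <;> exact Fin.mk_eq_mk.mpr (by omega)
    simp only [map_mul, map_inv, FreeGroup.lift_apply_of]
    rw [show swapGen n i =
        Equiv.swap ⟨(i : ℕ), by omega⟩ ⟨(i : ℕ) + 1, by omega⟩ from rfl, e2]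
    exact braid_swap_rel (by simp only [ne_eq, Fin.mk_eq_mk]; omega)
      (by simp only [ne_eq, Fin.mk_eq_mk]; omega) (by simp only [ne_eq, Fin.mk_eq_mk]; omega)
  · rw [map_commutatorElement]
    simp only [FreeGroup.lift_apply_of]
    rw [commutatorElement_eq_one_iff_commute]
    unfold swapGen
    exact swap_commute_of_ne (by simp only [ne_eq, Fin.mk_eq_mk]; omega)
      (by simp only [ne_eq, Fin.mk_eq_mk]; omega) (by simp only [ne_eq, Fin.mk_eq_mk]; omega)
      (by simp only [ne_eq, Fin.mk_eq_mk]; omega)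

/-- The canonical projection `B_n → S_n` sending `σ_k` to the transposition `(k, k+1)`. -/
def braidToPerm (n : ℕ) : BraidGroup n →* Equiv.Perm (Fin n) :=
  PresentedGroup.toGroup (f := swapGen n) (swapGen_rels n)

/-- The braid generator `σ_k` (`0`-indexed), or `1` if the index is out of range. -/
def sigmaN (n : ℕ) (k : ℕ) : BraidGroup n :=
  if h : k < n - 1 then PresentedGroup.of (⟨k, h⟩ : Fin (n - 1)) else 1

/-- The Artin pure braid generator `a_{ij}` (`0`-indexed), defined by
`a_{i,i+1} = σᵢ²` and `a_{i,j+1} = σⱼ a_{ij} σⱼ⁻¹`. -/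
def aB (n : ℕ) (i : ℕ) : ℕ → BraidGroup n
  | 0 => 1
  | j + 1 => if i = j then (sigmaN n i) ^ 2 else sigmaN n j * aB n i j * (sigmaN n j)⁻¹

/-- The pure braid group `P_n = ker (B_n → S_n)`. -/
abbrev pureKer (n : ℕ) : Subgroup (BraidGroup n) := MonoidHom.ker (braidToPerm n)



/-! ### Auxiliary group identities -/

section GroupAux
variable {G : Type*} [Group G]

lemma conj_conj_comm {a b : G} (h : a * b = b * a) (X : G) :
    a * (b * X * b⁻¹) * a⁻¹ = b * (a * X * a⁻¹) * b⁻¹ := by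
  have e1 : a * (b * X * b⁻¹) * a⁻¹ = (a * b) * X * (a * b)⁻¹ := by group
  have e2 : b * (a * X * a⁻¹) * b⁻¹ = (b * a) * X * (b * a)⁻¹ := by group
  rw [e1, e2, h]

lemma comm_aux (a b X : G) (h : a * b * a = b * a * b) (hbX : b * X = X * b) :
    a * (b * (a * X * a⁻¹) * b⁻¹) * a⁻¹ = b * (a * X * a⁻¹) * b⁻¹ := by
  have h1 : a * (b * (a * X * a⁻¹) * b⁻¹) * a⁻¹ = (a * b * a) * X * (a * b * a)⁻¹ := by group
  rw [h1, h]
  have h3 : (b * a * b) * X * (b * a * b)⁻¹ = b * a * (b * X) * (b⁻¹ * a⁻¹ * b⁻¹) := by group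
  rw [h3, hbX]
  group

lemma conj_sq (a b : G) (h : a * b * a = b * a * b) :
    a * (b * (a * a) * b⁻¹) * a⁻¹ = b * b := by
  have h1 : a * (b * (a * a) * b⁻¹) * a⁻¹ = (a * b * a) * (a * (b⁻¹ * a⁻¹)) := by group
  rw [h1, h]
  have h2 : (b * a * b) * (a * (b⁻¹ * a⁻¹)) = b * (a * b * a) * (b⁻¹ * a⁻¹) := by group
  rw [h2, h]
  group

lemma conj_sq' (a b : G) (h : a * b * a = b * a * b) :
    a * (b * b) * a⁻¹ = (b * b)⁻¹ * (b * (a * a) * b⁻¹ * (b * b)) := by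
  apply mul_left_cancel (a := b * b)
  have e1 : b * b * (a * (b * b) * a⁻¹) = b * (b * a * b) * (b * a⁻¹) := by group
  rw [e1, ← h]
  have e2 : b * (a * b * a) * (b * a⁻¹) = b * a * (b * a * b) * a⁻¹ := by group
  rw [e2, ← h]
  group

end GroupAux

/-! ### Basic relations in the braid group -/

lemma sigmaN_eq (n : ℕ) (k : Fin (n - 1)) : sigmaN n (k : ℕ) = PresentedGroup.of k := by
  unfold sigmaN
  rw [dif_pos k.2]

lemma braidToPerm_of (n : ℕ) (x : Fin (n - 1)) :
    braidToPerm n (PresentedGroup.of x) = swapGen n x :=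
  PresentedGroup.toGroup.of (swapGen_rels n)

lemma braid_rel (n k : ℕ) (h : k + 2 ≤ n - 1) :
    sigmaN n k * sigmaN n (k + 1) * sigmaN n k
      = sigmaN n (k + 1) * sigmaN n k * sigmaN n (k + 1) := by
  have hk : k < n - 1 := by omega
  have hk1 : k + 1 < n - 1 := by omega
  have hr : (FreeGroup.of (⟨k, hk⟩ : Fin (n - 1)) * FreeGroup.of (⟨k + 1, hk1⟩ : Fin (n - 1)) *
      FreeGroup.of (⟨k, hk⟩ : Fin (n - 1)) *
      (FreeGroup.of (⟨k + 1, hk1⟩ : Fin (n - 1)) * FreeGroup.of (⟨k, hk⟩ : Fin (n - 1)) *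
        FreeGroup.of (⟨k + 1, hk1⟩ : Fin (n - 1)))⁻¹) ∈ braidRels n :=
    Or.inl ⟨⟨k, hk⟩, ⟨k + 1, hk1⟩, rfl, rfl⟩
  have h1 : PresentedGroup.mk (braidRels n)
      (FreeGroup.of (⟨k, hk⟩ : Fin (n - 1)) * FreeGroup.of (⟨k + 1, hk1⟩ : Fin (n - 1)) *
        FreeGroup.of (⟨k, hk⟩ : Fin (n - 1)) *
        (FreeGroup.of (⟨k + 1, hk1⟩ : Fin (n - 1)) * FreeGroup.of (⟨k, hk⟩ : Fin (n - 1)) *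
          FreeGroup.of (⟨k + 1, hk1⟩ : Fin (n - 1)))⁻¹) = 1 :=
    (QuotientGroup.eq_one_iff _).mpr (Subgroup.subset_normalClosure hr)
  rw [map_mul, map_mul, map_mul, map_inv, map_mul, map_mul, mul_inv_eq_one] at h1
  unfold sigmaN
  rw [dif_pos hk, dif_pos hk1]
  exact h1

lemma sigma_comm (n : ℕ) {k l : ℕ} (h : k + 2 ≤ l) :
    Commute (sigmaN n k) (sigmaN n l) := by
  by_cases hl : l < n - 1
  · have hk : k < n - 1 := by omega
    have hr : ⁅FreeGroup.of (⟨k, hk⟩ : Fin (n - 1)), FreeGroup.of (⟨l, hl⟩ : Fin (n - 1))⁆ ∈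
        braidRels n := Or.inr ⟨⟨k, hk⟩, ⟨l, hl⟩, Or.inl h, rfl⟩
    have h1 : PresentedGroup.mk (braidRels n)
        ⁅FreeGroup.of (⟨k, hk⟩ : Fin (n - 1)), FreeGroup.of (⟨l, hl⟩ : Fin (n - 1))⁆ = 1 :=
      (QuotientGroup.eq_one_iff _).mpr (Subgroup.subset_normalClosure hr)
    rw [map_commutatorElement, commutatorElement_eq_one_iff_commute] at h1
    unfold sigmaN
    rw [dif_pos hk, dif_pos hl]
    exact h1
  · have : sigmaN n l = 1 := by unfold sigmaN; rw [dif_neg hl]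
    rw [this]
    exact Commute.one_right _

lemma sigma_sq_mem (n k : ℕ) : sigmaN n k ^ 2 ∈ pureKer n := by
  unfold sigmaN
  split
  · rename_i h
    rw [MonoidHom.mem_ker, map_pow, braidToPerm_of, sq]
    exact Equiv.swap_mul_self _ _
  · simp

lemma aB_mem (n : ℕ) : ∀ (j i : ℕ), aB n i j ∈ pureKer n
  | 0, i => by rw [show aB n i 0 = 1 from rfl]; exact one_mem _
  | j + 1, i => by
    rw [aB]
    split
    · exact sigma_sq_mem n i
    · have hX : braidToPerm n (aB n i j) = 1 := aB_mem n j i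
      rw [MonoidHom.mem_ker, map_mul, map_mul, map_inv, hX, mul_one, mul_inv_cancel]

lemma aB_eq_one (n : ℕ) : ∀ (j i : ℕ), j ≤ i → aB n i j = 1
  | 0, i, _ => rfl
  | j + 1, i, h => by
    rw [aB, if_neg (by omega), aB_eq_one n j i (by omega), mul_one, mul_inv_cancel]

/-- Far commutation: `σ_k` commutes with `a_{ij}` when `k ≥ j+1` or `k+2 ≤ i`. -/
lemma comm_far (n : ℕ) : ∀ (j : ℕ) {k i : ℕ}, (j + 1 ≤ k ∨ k + 2 ≤ i) →
    Commute (sigmaN n k) (aB n i j)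
  | 0, k, i, _ => by rw [show aB n i 0 = 1 from rfl]; exact Commute.one_right _
  | j + 1, k, i, h => by
    rw [aB]
    split
    · rename_i hij
      subst hij
      have hc : Commute (sigmaN n k) (sigmaN n i) := by
        rcases h with h | h
        · exact (sigma_comm n (by omega)).symm
        · exact sigma_comm n h
      exact hc.pow_right 2
    · rename_i hij
      by_cases hji : j + 1 ≤ i
      · rw [aB_eq_one n j i (by omega), mul_one, mul_inv_cancel]
        exact Commute.one_right _
      · have hij' : i < j := by omega
        have hc : Commute (sigmaN n k) (sigmaN n j) := by
          rcases h with h | h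
          · exact (sigma_comm n (by omega)).symm
          · exact sigma_comm n (by omega)
        have hIH : Commute (sigmaN n k) (aB n i j) :=
          comm_far n j (h.imp (fun hh => by omega) fun hh => hh)
        exact (hc.mul_right hIH).mul_right hc.inv_right

/-- Inside commutation: `σ_k` commutes with `a_{ij}` when `i < k` and `k+1 < j`. -/
lemma comm_inside (n : ℕ) {k i : ℕ} (hik : i + 1 ≤ k) :
    ∀ j, k + 2 ≤ j → j ≤ n - 1 → Commute (sigmaN n k) (aB n i j) := by
  intro j hj
  induction j, hj using Nat.le_induction with
  | base =>
    intro hn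
    have e1 : aB n i (k + 1 + 1) = sigmaN n (k + 1) *
        (sigmaN n k * aB n i k * (sigmaN n k)⁻¹) * (sigmaN n (k + 1))⁻¹ := by
      rw [aB, if_neg (by omega), aB, if_neg (by omega)]
    have hbr : sigmaN n k * sigmaN n (k + 1) * sigmaN n k
        = sigmaN n (k + 1) * sigmaN n k * sigmaN n (k + 1) := braid_rel n k (by omega)
    have hbX : sigmaN n (k + 1) * aB n i k = aB n i k * sigmaN n (k + 1) :=
      (comm_far n k (Or.inl (by omega))).eq
    have E : sigmaN n k * (sigmaN n (k + 1) * (sigmaN n k * aB n i k * (sigmaN n k)⁻¹) *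
        (sigmaN n (k + 1))⁻¹) * (sigmaN n k)⁻¹
        = sigmaN n (k + 1) * (sigmaN n k * aB n i k * (sigmaN n k)⁻¹) * (sigmaN n (k + 1))⁻¹ :=
      comm_aux _ _ _ hbr hbX
    show sigmaN n k * aB n i (k + 2) = aB n i (k + 2) * sigmaN n k
    rw [show k + 2 = k + 1 + 1 from rfl, e1]
    exact mul_inv_eq_iff_eq_mul.mp E
  | succ j hj ih =>
    intro hn
    have e1 : aB n i (j + 1) = sigmaN n j * aB n i j * (sigmaN n j)⁻¹ := by
      rw [aB, if_neg (by omega)]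
    rw [e1]
    have hc : Commute (sigmaN n k) (sigmaN n j) := sigma_comm n (by omega)
    exact (hc.mul_right (ih (by omega))).mul_right hc.inv_right

lemma conj_aB_left (n : ℕ) {i : ℕ} :
    ∀ j, i + 2 ≤ j → j ≤ n - 1 →
      sigmaN n i * aB n i j * (sigmaN n i)⁻¹ = aB n (i + 1) j := by
  intro j hj
  induction j, hj using Nat.le_induction with
  | base =>
    intro hn
    have e1 : aB n i (i + 1 + 1) = sigmaN n (i + 1) * (sigmaN n i * sigmaN n i) *
        (sigmaN n (i + 1))⁻¹ := by
      rw [aB, if_neg (by omega), aB, if_pos rfl, pow_two]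
    have e2 : aB n (i + 1) (i + 1 + 1) = sigmaN n (i + 1) * sigmaN n (i + 1) := by
      rw [aB, if_pos rfl, pow_two]
    rw [show i + 2 = i + 1 + 1 from rfl, e1, e2]
    exact conj_sq _ _ (braid_rel n i (by omega))
  | succ j hj ih =>
    intro hn
    have e1 : aB n i (j + 1) = sigmaN n j * aB n i j * (sigmaN n j)⁻¹ := by
      rw [aB, if_neg (by omega)]
    have e2 : aB n (i + 1) (j + 1) = sigmaN n j * aB n (i + 1) j * (sigmaN n j)⁻¹ := by
      rw [aB, if_neg (by omega)]
    rw [e1, e2, ← ih (by omega)]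
    exact conj_conj_comm (sigma_comm n hj).eq _

lemma conj_aB_left' (n : ℕ) {i : ℕ} (hi : 1 ≤ i) :
    ∀ j, i + 1 ≤ j → j ≤ n - 1 →
      sigmaN n (i - 1) * aB n i j * (sigmaN n (i - 1))⁻¹
        = (aB n i j)⁻¹ * (aB n (i - 1) j * aB n i j) := by
  obtain ⟨m, rfl⟩ : ∃ m, i = m + 1 := ⟨i - 1, by omega⟩
  simp only [Nat.add_sub_cancel]
  intro j hj
  induction j, hj using Nat.le_induction with
  | base =>
    intro hn
    have e1 : aB n (m + 1) (m + 1 + 1) = sigmaN n (m + 1) * sigmaN n (m + 1) := by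
      rw [aB, if_pos rfl, pow_two]
    have e2 : aB n m (m + 1 + 1) = sigmaN n (m + 1) * (sigmaN n m * sigmaN n m) *
        (sigmaN n (m + 1))⁻¹ := by
      rw [aB, if_neg (by omega), aB, if_pos rfl, pow_two]
    rw [e1, e2]
    exact conj_sq' _ _ (braid_rel n m (by omega))
  | succ j hj ih =>
    intro hn
    have e1 : aB n (m + 1) (j + 1) = sigmaN n j * aB n (m + 1) j * (sigmaN n j)⁻¹ := by
      rw [aB, if_neg (by omega)]
    have e2 : aB n m (j + 1) = sigmaN n j * aB n m j * (sigmaN n j)⁻¹ := by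
      rw [aB, if_neg (by omega)]
    have hc : sigmaN n m * sigmaN n j = sigmaN n j * sigmaN n m :=
      (sigma_comm n (k := m) (by omega)).eq
    rw [e1, e2, conj_conj_comm hc, ih (by omega)]
    group

lemma conj_aB_pred (n : ℕ) {i j : ℕ} (hij : i ≠ j) :
    sigmaN n j * aB n i (j + 1) * (sigmaN n j)⁻¹
      = aB n j (j + 1) * aB n i j * (aB n j (j + 1))⁻¹ := by
  have e1 : aB n i (j + 1) = sigmaN n j * aB n i j * (sigmaN n j)⁻¹ := by
    rw [aB, if_neg hij]
  have e2 : aB n j (j + 1) = sigmaN n j ^ 2 := by rw [aB, if_pos rfl]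
  rw [e1, e2, pow_two]
  group

/-! ### Conjugation of Artin generators by braid generators -/

set_option maxHeartbeats 1000000 in
lemma gen_conj (n : ℕ) (k : Fin (n - 1)) (i j : Fin n) (hij : i < j) :
    ∃ g ∈ pureKer n, ∃ i' j' : Fin n, i' < j' ∧
      ((i' = braidToPerm n (PresentedGroup.of k) i ∧
          j' = braidToPerm n (PresentedGroup.of k) j) ∨
        (i' = braidToPerm n (PresentedGroup.of k) j ∧
          j' = braidToPerm n (PresentedGroup.of k) i)) ∧
      PresentedGroup.of (rels := braidRels n) k * aB n (i : ℕ) (j : ℕ) *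
          (PresentedGroup.of (rels := braidRels n) k)⁻¹
        = g * aB n (i' : ℕ) (j' : ℕ) * g⁻¹ := by
  have hk : (k : ℕ) < n - 1 := k.2
  have hIJ : (i : ℕ) < (j : ℕ) := hij
  have hjn : (j : ℕ) ≤ n - 1 := by have := j.2; omega
  set A : Fin n := ⟨(k : ℕ), by omega⟩ with hA
  set B : Fin n := ⟨(k : ℕ) + 1, by omega⟩ with hB
  have hAv : (A : ℕ) = (k : ℕ) := rfl
  have hBv : (B : ℕ) = (k : ℕ) + 1 := rfl
  have hperm : braidToPerm n (PresentedGroup.of k) = Equiv.swap A B := by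
    rw [braidToPerm_of]
    rfl
  have hsig : PresentedGroup.of (rels := braidRels n) k = sigmaN n (k : ℕ) :=
    (sigmaN_eq n k).symm
  by_cases h1 : (k : ℕ) = (j : ℕ)
  · -- k = j : conjugation sends a_{ij} to a_{i,j+1}
    refine ⟨1, one_mem _, i, B, by simp only [Fin.lt_def, hAv, hBv]; omega, ?_, ?_⟩
    · refine Or.inl ⟨?_, ?_⟩
      · rw [hperm]
        exact (Equiv.swap_apply_of_ne_of_ne (by simp only [ne_eq, Fin.ext_iff, hAv, hBv]; omega)
          (by simp only [ne_eq, Fin.ext_iff, hAv, hBv]; omega)).symm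
      · rw [hperm, show j = A from Fin.ext (by rw [hAv]; omega), Equiv.swap_apply_left]
    · rw [one_mul, inv_one, mul_one, hsig]
      have e : aB n (i : ℕ) ((k : ℕ) + 1) = sigmaN n (k : ℕ) * aB n (i : ℕ) (k : ℕ) *
          (sigmaN n (k : ℕ))⁻¹ := by
        rw [aB, if_neg (by omega)]
      rw [show ((B : Fin n) : ℕ) = (k : ℕ) + 1 from rfl, e, ← h1]
  by_cases h2 : (k : ℕ) + 1 = (j : ℕ) ∧ (i : ℕ) < (k : ℕ)
  · -- k = j - 1 > i
    refine ⟨aB n (k : ℕ) (j : ℕ), aB_mem n _ _, i, A, by simp only [Fin.lt_def, hAv, hBv]; omega, ?_, ?_⟩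
    · refine Or.inl ⟨?_, ?_⟩
      · rw [hperm]
        exact (Equiv.swap_apply_of_ne_of_ne (by simp only [ne_eq, Fin.ext_iff, hAv, hBv]; omega)
          (by simp only [ne_eq, Fin.ext_iff, hAv, hBv]; omega)).symm
      · rw [hperm, show j = B from Fin.ext (by rw [hBv]; omega), Equiv.swap_apply_right]
    · rw [hsig, show ((A : Fin n) : ℕ) = (k : ℕ) from rfl, ← h2.1]
      exact conj_aB_pred n (by omega)
  by_cases h3 : (k : ℕ) = (i : ℕ) ∧ (i : ℕ) + 1 = (j : ℕ)
  · -- k = i, j = i + 1 : a_{ij} = σ_i² commutes with σ_i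
    refine ⟨1, one_mem _, i, j, hij, ?_, ?_⟩
    · refine Or.inr ⟨?_, ?_⟩
      · rw [hperm, show j = B from Fin.ext (by rw [hBv]; omega), Equiv.swap_apply_right]
        exact Fin.ext (by simp only [hAv, hBv]; omega)
      · rw [hperm, show i = A from Fin.ext (by rw [hAv]; omega), Equiv.swap_apply_left]
        exact Fin.ext (by simp only [hAv, hBv]; omega)
    · rw [one_mul, inv_one, mul_one, hsig]
      have e : aB n (i : ℕ) ((i : ℕ) + 1) = sigmaN n (i : ℕ) ^ 2 := by rw [aB, if_pos rfl]
      rw [← h3.2, e, ← h3.1]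
      rw [((Commute.refl (sigmaN n (k : ℕ))).pow_right 2).eq, mul_inv_cancel_right]
  by_cases h4 : (k : ℕ) = (i : ℕ)
  · -- k = i, i + 1 < j
    have hj2 : (i : ℕ) + 2 ≤ (j : ℕ) := by omega
    refine ⟨1, one_mem _, B, j, by simp only [Fin.lt_def, hAv, hBv]; omega, ?_, ?_⟩
    · refine Or.inl ⟨?_, ?_⟩
      · rw [hperm, show i = A from Fin.ext (by rw [hAv]; omega), Equiv.swap_apply_left]
      · rw [hperm]
        exact (Equiv.swap_apply_of_ne_of_ne (by simp only [ne_eq, Fin.ext_iff, hAv, hBv]; omega)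
          (by simp only [ne_eq, Fin.ext_iff, hAv, hBv]; omega)).symm
    · rw [one_mul, inv_one, mul_one, hsig, hBv, h4]
      exact conj_aB_left n (j : ℕ) hj2 hjn
  by_cases h5 : (k : ℕ) + 1 = (i : ℕ)
  · -- k = i - 1
    refine ⟨(aB n (i : ℕ) (j : ℕ))⁻¹, inv_mem (aB_mem n _ _), A, j,
      by simp only [Fin.lt_def, hAv, hBv]; omega, ?_, ?_⟩
    · refine Or.inl ⟨?_, ?_⟩
      · rw [hperm, show i = B from Fin.ext (by rw [hBv]; omega), Equiv.swap_apply_right]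
      · rw [hperm]
        exact (Equiv.swap_apply_of_ne_of_ne (by simp only [ne_eq, Fin.ext_iff, hAv, hBv]; omega)
          (by simp only [ne_eq, Fin.ext_iff, hAv, hBv]; omega)).symm
    · have e := conj_aB_left' n (i := (i : ℕ)) (by omega) (j : ℕ) (by omega) hjn
      rw [hsig, show ((A : Fin n) : ℕ) = (k : ℕ) from rfl,
        show (k : ℕ) = (i : ℕ) - 1 by omega, e, inv_inv]
      group
  · -- remaining: σ_k commutes with a_{ij} and the swap fixes i and j
    have h6 : (k : ℕ) + 1 < (i : ℕ) ∨ (j : ℕ) < (k : ℕ) ∨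
        ((i : ℕ) < (k : ℕ) ∧ (k : ℕ) + 1 < (j : ℕ)) := by omega
    have hc : Commute (sigmaN n (k : ℕ)) (aB n (i : ℕ) (j : ℕ)) := by
      rcases h6 with h | h | h
      · exact comm_far n _ (Or.inr (by omega))
      · exact comm_far n _ (Or.inl (by omega))
      · exact comm_inside n (by omega) _ (by omega) hjn
    refine ⟨1, one_mem _, i, j, hij, ?_, ?_⟩
    · refine Or.inl ⟨?_, ?_⟩
      · rw [hperm]
        exact (Equiv.swap_apply_of_ne_of_ne (by simp only [ne_eq, Fin.ext_iff, hAv, hBv]; omega)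
          (by simp only [ne_eq, Fin.ext_iff, hAv, hBv]; omega)).symm
      · rw [hperm]
        exact (Equiv.swap_apply_of_ne_of_ne (by simp only [ne_eq, Fin.ext_iff, hAv, hBv]; omega)
          (by simp only [ne_eq, Fin.ext_iff, hAv, hBv]; omega)).symm
    · rw [one_mul, inv_one, mul_one, hsig, hc.eq, mul_inv_cancel_right]

set_option maxHeartbeats 1000000 in
/-- Conjugation by any braid sends a (pure-braid conjugate of an) Artin generator to a
pure-braid conjugate of the Artin generator with permuted indices. -/
lemma conj_aB_all (n : ℕ) (σ : BraidGroup n) : ∀ i j : Fin n, i < j →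
    ∃ g ∈ pureKer n, ∃ i' j' : Fin n, i' < j' ∧
      ((i' = braidToPerm n σ i ∧ j' = braidToPerm n σ j) ∨
        (i' = braidToPerm n σ j ∧ j' = braidToPerm n σ i)) ∧
      σ * aB n (i : ℕ) (j : ℕ) * σ⁻¹ = g * aB n (i' : ℕ) (j' : ℕ) * g⁻¹ := by
  set P : BraidGroup n → Prop := fun τ => ∀ i j : Fin n, i < j →
    ∃ g ∈ pureKer n, ∃ i' j' : Fin n, i' < j' ∧
      ((i' = braidToPerm n τ i ∧ j' = braidToPerm n τ j) ∨
        (i' = braidToPerm n τ j ∧ j' = braidToPerm n τ i)) ∧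
      τ * aB n (i : ℕ) (j : ℕ) * τ⁻¹ = g * aB n (i' : ℕ) (j' : ℕ) * g⁻¹ with hP
  have h1 : P 1 := by
    intro i j hij
    exact ⟨1, one_mem _, i, j, hij, Or.inl ⟨by simp, by simp⟩, by simp⟩
  have hmul : ∀ a b : BraidGroup n, P a → P b → P (a * b) := by
    intro a b ha hb i j hij
    obtain ⟨g, hg, i₁, j₁, hlt₁, hor₁, heq₁⟩ := hb i j hij
    obtain ⟨g₂, hg₂, i₂, j₂, hlt₂, hor₂, heq₂⟩ := ha i₁ j₁ hlt₁
    refine ⟨a * g * a⁻¹ * g₂, ?_, i₂, j₂, hlt₂, ?_, ?_⟩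
    · rw [MonoidHom.mem_ker] at hg hg₂ ⊢
      simp [map_mul, map_inv, hg, hg₂]
    · have hab : ∀ x : Fin n, braidToPerm n (a * b) x = braidToPerm n a (braidToPerm n b x) := by
        intro x; rw [map_mul]; rfl
      rcases hor₁ with ⟨e1, e2⟩ | ⟨e1, e2⟩ <;> rcases hor₂ with ⟨f1, f2⟩ | ⟨f1, f2⟩
      · exact Or.inl ⟨by rw [hab, ← e1]; exact f1, by rw [hab, ← e2]; exact f2⟩
      · exact Or.inr ⟨by rw [hab, ← e2]; exact f1, by rw [hab, ← e1]; exact f2⟩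
      · exact Or.inr ⟨by rw [hab, ← e1]; exact f1, by rw [hab, ← e2]; exact f2⟩
      · exact Or.inl ⟨by rw [hab, ← e2]; exact f1, by rw [hab, ← e1]; exact f2⟩
    · have e : (a * b) * aB n (i : ℕ) (j : ℕ) * (a * b)⁻¹
          = a * (b * aB n (i : ℕ) (j : ℕ) * b⁻¹) * a⁻¹ := by group
      rw [e, heq₁]
      have e' : a * (g * aB n (i₁ : ℕ) (j₁ : ℕ) * g⁻¹) * a⁻¹
          = (a * g * a⁻¹) * (a * aB n (i₁ : ℕ) (j₁ : ℕ) * a⁻¹) * (a * g * a⁻¹)⁻¹ := by group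
      rw [e', heq₂]
      group
  have hinv : ∀ a : BraidGroup n, P a → P a⁻¹ := by
    intro a ha i j hij
    set s := braidToPerm n a with hs
    have hne : s⁻¹ i ≠ s⁻¹ j := fun h => absurd (s⁻¹.injective h) (ne_of_lt hij)
    have hback : ∀ x : Fin n, s (s⁻¹ x) = x := fun x => Equiv.apply_symm_apply s x
    rcases lt_or_gt_of_ne hne with huv | huv
    · obtain ⟨g, hg, i₂, j₂, hlt₂, hor₂, heq₂⟩ := ha (s⁻¹ i) (s⁻¹ j) huv
      have hij₂ : i₂ = i ∧ j₂ = j := by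
        rcases hor₂ with ⟨e1, e2⟩ | ⟨e1, e2⟩
        · rw [← hs, hback] at e1 e2; exact ⟨e1, e2⟩
        · rw [← hs, hback] at e1 e2
          exact absurd (e2 ▸ e1 ▸ hlt₂) (not_lt.mpr (le_of_lt hij))
      rw [hij₂.1, hij₂.2] at heq₂
      refine ⟨a⁻¹ * g⁻¹ * a, ?_, s⁻¹ i, s⁻¹ j, huv, ?_, ?_⟩
      · rw [MonoidHom.mem_ker] at hg ⊢
        simp [map_mul, map_inv, hg]
      · exact Or.inl ⟨by rw [map_inv, ← hs], by rw [map_inv, ← hs]⟩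
      · have e : aB n (i : ℕ) (j : ℕ)
            = g⁻¹ * (a * aB n ((s⁻¹ i : Fin n) : ℕ) ((s⁻¹ j : Fin n) : ℕ) * a⁻¹) * g := by
          rw [heq₂]; group
        rw [e]; group
    · obtain ⟨g, hg, i₂, j₂, hlt₂, hor₂, heq₂⟩ := ha (s⁻¹ j) (s⁻¹ i) huv
      have hij₂ : i₂ = i ∧ j₂ = j := by
        rcases hor₂ with ⟨e1, e2⟩ | ⟨e1, e2⟩
        · rw [← hs, hback] at e1 e2
          exact absurd (e2 ▸ e1 ▸ hlt₂) (not_lt.mpr (le_of_lt hij))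
        · rw [← hs, hback] at e1 e2; exact ⟨e1, e2⟩
      rw [hij₂.1, hij₂.2] at heq₂
      refine ⟨a⁻¹ * g⁻¹ * a, ?_, s⁻¹ j, s⁻¹ i, huv, ?_, ?_⟩
      · rw [MonoidHom.mem_ker] at hg ⊢
        simp [map_mul, map_inv, hg]
      · exact Or.inr ⟨by rw [map_inv, ← hs], by rw [map_inv, ← hs]⟩
      · have e : aB n (i : ℕ) (j : ℕ)
            = g⁻¹ * (a * aB n ((s⁻¹ j : Fin n) : ℕ) ((s⁻¹ i : Fin n) : ℕ) * a⁻¹) * g := by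
          rw [heq₂]; group
        rw [e]; group
  let H : Subgroup (BraidGroup n) :=
    { carrier := {τ | P τ}
      one_mem' := h1
      mul_mem' := fun {a} {b} ha hb => hmul a b ha hb
      inv_mem' := fun {a} ha => hinv a ha }
  have : σ ∈ H := PresentedGroup.generated_by (braidRels n) H (fun x => gen_conj n x) σ
  exact this

theorem adj_inv_of_adj {n : ℕ} (Γ : SimpleGraph (Fin n)) (s : Equiv.Perm (Fin n))
    (hs : ∀ i j : Fin n, Γ.Adj i j → Γ.Adj (s i) (s j)) :
    ∀ i j : Fin n, Γ.Adj (s i) (s j) → Γ.Adj i j := by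
  have hpow : ∀ t : ℕ, ∀ i j : Fin n, Γ.Adj i j → Γ.Adj ((s ^ t) i) ((s ^ t) j) := by
    intro t
    induction t with
    | zero => simp
    | succ t ih =>
      intro i j h
      have e : ∀ x : Fin n, (s ^ (t + 1)) x = (s ^ t) (s x) := by
        intro x; rw [pow_succ, Equiv.Perm.mul_apply]
      rw [e, e]
      exact ih _ _ (hs _ _ h)
  intro i j h
  have hm : s ^ orderOf s = 1 := pow_orderOf_eq_one s
  have hpos : 0 < orderOf s := orderOf_pos s
  have key : ∀ x : Fin n, (s ^ (orderOf s - 1)) (s x) = x := by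
    intro x
    rw [← Equiv.Perm.mul_apply, ← pow_succ, Nat.sub_add_cancel hpos, hm]
    rfl
  have := hpow (orderOf s - 1) _ _ h
  rwa [key, key] at this

/-- The normal closure, in the pure braid group `P_n = ker p`, of the set of Artin generators
`a_{ij}` corresponding to non-edges of `Γ`; realized as the subgroup of `B_n` generated by all
`P_n`-conjugates of these generators. -/
def graphN {n : ℕ} (Γ : SimpleGraph (Fin n)) : Subgroup (BraidGroup n) :=
  Subgroup.closure
    {x | ∃ g ∈ pureKer n, ∃ (i j : Fin n) (_ : i < j),
        ¬ Γ.Adj i j ∧ x = g * aB n (i : ℕ) (j : ℕ) * g⁻¹}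

set_option maxHeartbeats 1000000 in
/-- The normal closure `N` of `{a_{ij} : {i,j} ∉ E_Γ}` in `P_n` is normalized
by every braid `σ ∈ B̃_Γ = p⁻¹(Aut Γ)`. -/
theorem graphN_normal_in_Btilde {n : ℕ} (Γ : SimpleGraph (Fin n)) (σ : BraidGroup n)
    (hσ : ∀ i j : Fin n, Γ.Adj i j → Γ.Adj (braidToPerm n σ i) (braidToPerm n σ j)) :
    ∀ g ∈ graphN Γ, σ * g * σ⁻¹ ∈ graphN Γ := by
  have hpres : ∀ i j : Fin n, ¬ Γ.Adj i j →
      ¬ Γ.Adj (braidToPerm n σ i) (braidToPerm n σ j) := by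
    intro i j hna h
    exact hna (adj_inv_of_adj Γ (braidToPerm n σ) hσ i j h)
  intro g hg
  refine Subgroup.closure_induction (p := fun x _ => σ * x * σ⁻¹ ∈ graphN Γ) ?_ ?_ ?_ ?_ hg
  · rintro x ⟨g₀, hg₀, i, j, hij, hna, rfl⟩
    obtain ⟨h, hh, i', j', hlt, hor, heq⟩ := conj_aB_all n σ i j hij
    have hna' : ¬ Γ.Adj i' j' := by
      rcases hor with ⟨e1, e2⟩ | ⟨e1, e2⟩
      · rw [e1, e2]; exact hpres i j hna
      · rw [e1, e2]; exact hpres j i (fun hadj => hna hadj.symm)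
    have hmem : σ * g₀ * σ⁻¹ * h ∈ pureKer n := by
      have h₀ : braidToPerm n g₀ = 1 := hg₀
      have h₁ : braidToPerm n h = 1 := hh
      rw [MonoidHom.mem_ker]
      simp [map_mul, map_inv, h₀, h₁]
    apply Subgroup.subset_closure
    refine ⟨σ * g₀ * σ⁻¹ * h, hmem, i', j', hlt, hna', ?_⟩
    have e : σ * (g₀ * aB n (i : ℕ) (j : ℕ) * g₀⁻¹) * σ⁻¹
        = (σ * g₀ * σ⁻¹) * (σ * aB n (i : ℕ) (j : ℕ) * σ⁻¹) * (σ * g₀ * σ⁻¹)⁻¹ := by group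
    rw [e, heq]
    group
  · simp only [mul_one, mul_inv_cancel]
    exact one_mem _
  · intro x y _ _ hx hy
    have e : σ * (x * y) * σ⁻¹ = (σ * x * σ⁻¹) * (σ * y * σ⁻¹) := by group
    rw [e]
    exact mul_mem hx hy
  · intro x _ hx
    have e : σ * x⁻¹ * σ⁻¹ = (σ * x * σ⁻¹)⁻¹ := by group
    rw [e]
    exact inv_mem hx

end GraphicBraid
end
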